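/- arXiv:1703.03238 — 4 statements merged into one kernel-verified Lean document; each statement's English description precedes it below -/
import Mathlib

section
/- Suppose D satisfies Conditions (A) and (B), U is a penalty function for D with constant L, w : [0,T] → ℝ^d is α-Hölder continuous with w₀ = 0, x₀ ∈ D̄, and m ≥ 1 is an integer with 0 < ε_m^α(w) < r₀/2. Let m' ≥ m be an integer and set ξ̃^{m'}_t := ξ^{m'}_{t/m'} for t ∈ [0, m'T]. If u ∈ (0, m'T) satisfies dist(ξ̃^{m'}_u, D̄) = ε_m^α(w)/2, then after time u the path ξ̃^{m'} hits {x : dist(x, D̄) = ε_m^α(w)/3} before hitting {x : dist(x, D̄) = ε_m^α(w)}; precisely, for every t ∈ [u, m'T], if dist(ξ̃^{m'}_s, D̄) ≠ ε_m^α(w)/3 for all s ∈ [u, t], then dist(ξ̃^{m'}_t, D̄) < ε_m^α(w). -/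
open Set Metric MeasureTheory Filter

noncomputable section

abbrev Euc (d : ℕ) := EuclideanSpace ℝ (Fin d)

/-- The set 𝒩_{x,r} of inward unit normals at `x` with radius `r`. -/
def nset {d : ℕ} (D : Set (Euc d)) (x : Euc d) (r : ℝ) : Set (Euc d) :=
  {n : Euc d | ‖n‖ = 1 ∧ Metric.ball (x - r • n) r ∩ D = ∅}

/-- The set 𝒩_x = ⋃_{r>0} 𝒩_{x,r}. -/
def nsetAll {d : ℕ} (D : Set (Euc d)) (x : Euc d) : Set (Euc d) :=
  ⋃ r ∈ Set.Ioi (0 : ℝ), nset D x r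

/-- Condition (A): uniform exterior sphere condition with radius `r₀`. -/
def CondA {d : ℕ} (D : Set (Euc d)) (r₀ : ℝ) : Prop :=
  0 < r₀ ∧ ∀ x ∈ frontier D, nsetAll D x = nset D x r₀ ∧ (nset D x r₀).Nonempty

/-- Condition (B): local uniform interior cone-type condition with constants `δ`, `β`. -/
def CondB {d : ℕ} (D : Set (Euc d)) (δ β : ℝ) : Prop :=
  0 < δ ∧ 1 ≤ β ∧ ∀ x ∈ frontier D, ∃ l : Euc d, ‖l‖ = 1 ∧
    ∀ y ∈ Metric.ball x δ ∩ frontier D, ∀ n ∈ nsetAll D y, (1 / β : ℝ) ≤ inner ℝ l n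

/-- A penalty function `U` for `D` with constant `L`. -/
def IsPenalty {d : ℕ} (D : Set (Euc d)) (r₀ L : ℝ) (U : Euc d → ℝ) : Prop :=
  ContDiff ℝ 1 U ∧ (∀ x, 0 ≤ U x) ∧
  (∀ x, Metric.infDist x (closure D) ≤ r₀ / 2 →
    U x = Metric.infDist x (closure D) ^ 2) ∧
  (∃ M : ℝ, ∀ x, ‖gradient U x‖ ≤ M) ∧
  LipschitzWith (Real.toNNReal (2 * L)) (gradient U)

/-- `ξ` is the (continuous) solution of the penalized equation
`ξ_t = x₀ + w_t − (m/2)∫₀^t ∇U(ξ_s) ds` on `[0,T]`. -/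
def IsPenalizedSol {d : ℕ} (U : Euc d → ℝ) (T : ℝ) (w : ℝ → Euc d) (x₀ : Euc d) (m : ℕ)
    (ξ : ℝ → Euc d) : Prop :=
  ContinuousOn ξ (Set.Icc 0 T) ∧
  ∀ t ∈ Set.Icc 0 T, ξ t = x₀ + w t - ((m : ℝ) / 2) • ∫ s in (0 : ℝ)..t, gradient U (ξ s)

/-- `w` is `α`-Hölder on `[0,T]` with constant `C`. -/
def IsHolder {d : ℕ} (w : ℝ → Euc d) (T α C : ℝ) : Prop :=
  ∀ s t : ℝ, 0 ≤ s → s ≤ t → t ≤ T → ‖w t - w s‖ ≤ C * (t - s) ^ α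

/-- The `α`-Hölder seminorm ‖w‖_α of `w` on `[0,T]`. -/
def holderSemi {d : ℕ} (w : ℝ → Euc d) (T α : ℝ) : ℝ :=
  sSup {c : ℝ | ∃ s t : ℝ, 0 ≤ s ∧ s < t ∧ t ≤ T ∧ c = ‖w t - w s‖ / (t - s) ^ α}

/-- ε_m^α(w) = (12 e^L / m^α) ‖w‖_α. -/
def epsm {d : ℕ} (w : ℝ → Euc d) (T α L : ℝ) (m : ℕ) : ℝ :=
  12 * Real.exp L / (m : ℝ) ^ α * holderSemi w T α

/-- ‖w‖_T = sup_{0 ≤ t ≤ T} |w_t|. -/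
def supNorm {d : ℕ} (w : ℝ → Euc d) (T : ℝ) : ℝ :=
  sSup ((fun t => ‖w t‖) '' Set.Icc 0 T)

/-- The oscillation Δ_{s,t}(f) = sup{ |f_{t₂} − f_{t₁}| : s ≤ t₁ < t₂ ≤ t }. -/
def osc {d : ℕ} (f : ℝ → Euc d) (s t : ℝ) : ℝ :=
  sSup {c : ℝ | ∃ u v : ℝ, s ≤ u ∧ u < v ∧ v ≤ t ∧ c = ‖f v - f u‖}

/-- `(ξ, φ)` solves the Skorokhod problem `ξ_t = x₀ + w_t + φ_t` on `[0,T]` for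
the domain `D`. -/
def IsSkorokhod {d : ℕ} (D : Set (Euc d)) (T : ℝ) (w : ℝ → Euc d) (x₀ : Euc d)
    (ξ φ : ℝ → Euc d) : Prop :=
  (∀ t ∈ Set.Icc 0 T, ξ t = x₀ + w t + φ t) ∧
  ContinuousOn ξ (Set.Icc 0 T) ∧ (∀ t ∈ Set.Icc 0 T, ξ t ∈ closure D) ∧
  ContinuousOn φ (Set.Icc 0 T) ∧ φ 0 = 0 ∧
  BoundedVariationOn φ (Set.Icc 0 T) ∧
  ∃ S : StieltjesFunction ℝ, (∀ t ∈ Set.Icc 0 T, S t = variationOnFromTo φ (Set.Icc 0 T) 0 t) ∧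
    ∃ nv : ℝ → Euc d, Measurable nv ∧
      (∀ t ∈ Set.Icc 0 T, φ t = ∫ s in Set.Icc 0 t, nv s ∂S.measure) ∧
      (∀ s ∈ Set.Icc 0 T, ξ s ∈ frontier D → nv s ∈ nsetAll D (ξ s)) ∧
      (∀ t ∈ Set.Icc 0 T, variationOnFromTo φ (Set.Icc 0 T) 0 t
          = (S.measure {s | s ∈ Set.Icc 0 t ∧ ξ s ∈ frontier D}).toReal)


private lemma grad_sq_eq {d : ℕ} {D : Set (Euc d)} (hDne : D.Nonempty) {r₀ L : ℝ}
    {U : Euc d → ℝ} (hU : IsPenalty D r₀ L U) {x : Euc d}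
    (hx : Metric.infDist x (closure D) < r₀ / 2) :
    ‖gradient U x‖ ^ 2 = 4 * U x := by
  obtain ⟨p, hpD, hpdist⟩ :=
    isClosed_closure.exists_infDist_eq_dist (hDne.mono subset_closure) x
  have hUdiff : DifferentiableAt ℝ U x := (hU.1.differentiable one_ne_zero).differentiableAt
  have hN : HasFDerivAt (fun y : Euc d => ‖y - p‖ ^ 2)
      (2 • (innerSL ℝ (x - p)).comp (ContinuousLinearMap.id ℝ (Euc d))) x := by
    simpa using ((hasFDerivAt_id x).sub_const p).norm_sq
  have hmin : IsLocalMin (fun y : Euc d => ‖y - p‖ ^ 2 - U y) x := by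
    have hopen : IsOpen {y : Euc d | Metric.infDist y (closure D) < r₀ / 2} :=
      isOpen_lt (continuous_infDist_pt _) continuous_const
    have hx' : x ∈ {y : Euc d | Metric.infDist y (closure D) < r₀ / 2} := hx
    filter_upwards [hopen.mem_nhds hx'] with y hy
    have h1 : U y = Metric.infDist y (closure D) ^ 2 := hU.2.2.1 y (le_of_lt hy)
    have h2 : U x = Metric.infDist x (closure D) ^ 2 := hU.2.2.1 x hx.le
    have h3 : Metric.infDist y (closure D) ≤ ‖y - p‖ := by
      rw [← dist_eq_norm]; exact Metric.infDist_le_dist_of_mem hpD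
    have h4 : Metric.infDist y (closure D) ^ 2 ≤ ‖y - p‖ ^ 2 :=
      pow_le_pow_left₀ Metric.infDist_nonneg h3 2
    have h5 : ‖x - p‖ ^ 2 = U x := by rw [h2, hpdist, dist_eq_norm]
    show ‖x - p‖ ^ 2 - U x ≤ ‖y - p‖ ^ 2 - U y
    rw [h1, h5]
    linarith
  have hzero := hmin.hasFDerivAt_eq_zero (hN.sub hUdiff.hasFDerivAt)
  have hfdU : fderiv ℝ U x
      = 2 • (innerSL ℝ (x - p)).comp (ContinuousLinearMap.id ℝ (Euc d)) := by
    have := sub_eq_zero.mp hzero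
    exact this.symm
  have hdual : InnerProductSpace.toDual ℝ (Euc d) ((2:ℝ) • (x - p))
      = 2 • (innerSL ℝ (x - p)).comp (ContinuousLinearMap.id ℝ (Euc d)) := by
    ext y
    simp [real_inner_smul_left]
  have hgrad : gradient U x = (2:ℝ) • (x - p) := by
    unfold gradient
    rw [hfdU, ← hdual, LinearIsometryEquiv.symm_apply_apply]
  have h2 : U x = Metric.infDist x (closure D) ^ 2 := hU.2.2.1 x hx.le
  have h5 : ‖x - p‖ = Metric.infDist x (closure D) := by rw [← dist_eq_norm, hpdist]
  rw [hgrad, norm_smul, h5, h2, Real.norm_ofNat]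
  ring

private lemma flow_decay {d : ℕ} {D : Set (Euc d)} (hDne : D.Nonempty) {r₀ L : ℝ}
    {U : Euc d → ℝ} (hU : IsPenalty D r₀ L U) {k a b ε : ℝ} (hk : 0 < k) (hab : a < b)
    {η : ℝ → Euc d}
    (hη : ∀ τ ∈ Set.Icc a b, HasDerivWithinAt η (-(k / 2) • gradient U (η τ)) (Set.Icc a b) τ)
    (hεr : ε < r₀ / 2)
    (h0 : Metric.infDist (η a) (closure D) ≤ ε) :
    Metric.infDist (η b) (closure D)
      ≤ Metric.infDist (η a) (closure D) * Real.exp (-(k * (b - a))) := by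
  have hηc : ContinuousOn η (Set.Icc a b) := fun τ hτ => (hη τ hτ).continuousWithinAt
  have hGη : ContinuousOn (fun τ => Metric.infDist (η τ) (closure D)) (Set.Icc a b) :=
    (continuous_infDist_pt _).comp_continuousOn hηc
  have hUc : Continuous U := hU.1.continuous
  have hψc : ContinuousOn (fun τ => U (η τ)) (Set.Icc a b) := hUc.comp_continuousOn hηc
  have hψd : ∀ τ ∈ Set.Ioo a b,
      HasDerivAt (fun τ => U (η τ)) (-(k / 2) * ‖gradient U (η τ)‖ ^ 2) τ := by
    intro τ hτ
    have hηd : HasDerivAt η (-(k / 2) • gradient U (η τ)) τ :=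
      (hη τ (Set.Ioo_subset_Icc_self hτ)).hasDerivAt (Icc_mem_nhds hτ.1 hτ.2)
    have hUdiff : DifferentiableAt ℝ U (η τ) := (hU.1.differentiable one_ne_zero).differentiableAt
    have hgradU : HasFDerivAt U (InnerProductSpace.toDual ℝ (Euc d) (gradient U (η τ))) (η τ) :=
      hUdiff.hasGradientAt
    have hcomp := hgradU.comp_hasDerivAt τ hηd
    refine hcomp.congr_deriv ?_
    rw [InnerProductSpace.toDual_apply_apply, real_inner_smul_right, real_inner_self_eq_norm_sq]
  have hψmono : AntitoneOn (fun τ => U (η τ)) (Set.Icc a b) := by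
    apply antitoneOn_of_deriv_nonpos (convex_Icc a b) hψc
    · intro τ hτ
      rw [interior_Icc] at hτ
      exact ((hψd τ hτ).differentiableAt).differentiableWithinAt
    · intro τ hτ
      rw [interior_Icc] at hτ
      rw [(hψd τ hτ).deriv]
      nlinarith [sq_nonneg ‖gradient U (η τ)‖, hk]
  have hψa : U (η a) = Metric.infDist (η a) (closure D) ^ 2 :=
    hU.2.2.1 _ (h0.trans hεr.le)
  have hreg : ∀ τ ∈ Set.Icc a b, Metric.infDist (η τ) (closure D) < r₀ / 2 := by
    by_contra hcon
    push_neg at hcon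
    obtain ⟨τ₁, hτ₁, hτ₁r⟩ := hcon
    have hsub : Set.Icc a τ₁ ⊆ Set.Icc a b := Set.Icc_subset_Icc le_rfl hτ₁.2
    have hmem : r₀ / 2 ∈ Set.Icc (Metric.infDist (η a) (closure D))
        (Metric.infDist (η τ₁) (closure D)) := ⟨h0.trans hεr.le, hτ₁r⟩
    obtain ⟨τ₂, hτ₂, hτ₂e⟩ := intermediate_value_Icc hτ₁.1 (hGη.mono hsub) hmem
    have hτ₂b : τ₂ ∈ Set.Icc a b := hsub hτ₂
    have hτ₂e' : Metric.infDist (η τ₂) (closure D) = r₀ / 2 := hτ₂e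
    have h1 : U (η τ₂) = (r₀ / 2) ^ 2 := by
      rw [hU.2.2.1 _ (le_of_eq hτ₂e'), hτ₂e']
    have h2 : U (η τ₂) ≤ U (η a) :=
      hψmono (Set.left_mem_Icc.mpr hab.le) hτ₂b hτ₂.1
    rw [h1, hψa] at h2
    nlinarith [Metric.infDist_nonneg (x := η a) (s := closure D), h0, hεr]
  have hχd : ∀ τ ∈ Set.Ioo a b,
      HasDerivAt (fun τ => Real.exp (2 * k * (τ - a)) * U (η τ)) 0 τ := by
    intro τ hτ
    have h1 : HasDerivAt (fun τ : ℝ => 2 * k * (τ - a)) (2 * k) τ := by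
      simpa using ((hasDerivAt_id τ).sub_const a).const_mul (2 * k)
    have he : HasDerivAt (fun τ => Real.exp (2 * k * (τ - a)))
        (Real.exp (2 * k * (τ - a)) * (2 * k)) τ := h1.exp
    have hmul := he.mul (hψd τ hτ)
    have hsq : ‖gradient U (η τ)‖ ^ 2 = 4 * U (η τ) :=
      grad_sq_eq hDne hU (hreg τ (Set.Ioo_subset_Icc_self hτ))
    rw [hsq] at hmul
    refine hmul.congr_deriv ?_
    ring
  have hχmono : AntitoneOn (fun τ => Real.exp (2 * k * (τ - a)) * U (η τ)) (Set.Icc a b) := by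
    apply antitoneOn_of_deriv_nonpos (convex_Icc a b)
    · exact (Real.continuous_exp.comp (by continuity)).continuousOn.mul hψc
    · intro τ hτ
      rw [interior_Icc] at hτ
      exact (hχd τ hτ).differentiableAt.differentiableWithinAt
    · intro τ hτ
      rw [interior_Icc] at hτ
      rw [(hχd τ hτ).deriv]
  have hχab := hχmono (Set.left_mem_Icc.mpr hab.le) (Set.right_mem_Icc.mpr hab.le) hab.le
  simp only [sub_self, mul_zero, Real.exp_zero, one_mul] at hχab
  have hψb : U (η b) = Metric.infDist (η b) (closure D) ^ 2 :=
    hU.2.2.1 _ (hreg b (Set.right_mem_Icc.mpr hab.le)).le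
  set Ga := Metric.infDist (η a) (closure D)
  set Gb := Metric.infDist (η b) (closure D)
  have hGa0 : 0 ≤ Ga := Metric.infDist_nonneg
  have hGb0 : 0 ≤ Gb := Metric.infDist_nonneg
  set E := Real.exp (k * (b - a)) with hE
  have hE1 : 1 ≤ E := by
    rw [hE]
    apply Real.one_le_exp
    nlinarith [hab.le, hk]
  have hEpos : 0 < E := lt_of_lt_of_le one_pos hE1
  have hexp2 : Real.exp (2 * k * (b - a)) = E ^ 2 := by
    rw [hE, sq, ← Real.exp_add]
    congr 1
    ring
  have hkey : E ^ 2 * Gb ^ 2 ≤ Ga ^ 2 := by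
    rw [← hψb, ← hψa, ← hexp2]
    exact hχab
  have hGbE : Gb * E ≤ Ga := by
    nlinarith [mul_nonneg hGb0 hEpos.le, hGa0, hkey]
  rw [Real.exp_neg, ← hE, ← div_eq_mul_inv, le_div_iff₀ hEpos]
  exact hGbE

set_option maxHeartbeats 2000000 in
/-- the rescaled penalized path `ξ̃^{m'}_t = ξ^{m'}_{t/m'}`, once it hits
`∂D_{ε/2}`, hits `∂D_{ε/3}` before hitting `∂D_ε`, where `ε = ε_m^α(w)`. -/
theorem penalized_path_hits_inner_shell_first
    (d : ℕ) (hd : 1 ≤ d) (D : Set (Euc d)) (hDne : D.Nonempty) (hDopen : IsOpen D)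
    (r₀ δ β : ℝ) (hA : CondA D r₀) (hB : CondB D δ β)
    (L T α : ℝ) (hL : 0 < L) (hT : 0 < T) (hα : 0 < α) (hα2 : α < 1 / 2)
    (U : Euc d → ℝ) (hU : IsPenalty D r₀ L U)
    (w : ℝ → Euc d) (hw0 : w 0 = 0) (hHol : ∃ C : ℝ, IsHolder w T α C)
    (x₀ : Euc d) (hx₀ : x₀ ∈ closure D)
    (m : ℕ) (hm : 1 ≤ m)
    (hε1 : 0 < epsm w T α L m) (hε2 : epsm w T α L m < r₀ / 2)
    (m' : ℕ) (hm' : m ≤ m')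
    (ξ : ℝ → Euc d) (hξ : IsPenalizedSol U T w x₀ m' ξ)
    (u : ℝ) (hu0 : 0 < u) (hu1 : u < (m' : ℝ) * T)
    (hhit : Metric.infDist (ξ (u / (m' : ℝ))) (closure D) = epsm w T α L m / 2) :
    ∀ t ∈ Set.Icc u ((m' : ℝ) * T),
      (∀ s ∈ Set.Icc u t,
        Metric.infDist (ξ (s / (m' : ℝ))) (closure D) ≠ epsm w T α L m / 3) →
      Metric.infDist (ξ (t / (m' : ℝ))) (closure D) < epsm w T α L m := by
  intro t ht _hyp
  obtain ⟨hξc, hξeq⟩ := hξ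
  set mr := (m' : ℝ) with hmrdef
  set c := holderSemi w T α with hcdef
  set ε := epsm w T α L m with hεdef
  have hεval : ε = 12 * Real.exp L / (m:ℝ) ^ α * c := rfl
  have hm1 : (1:ℝ) ≤ (m : ℝ) := by exact_mod_cast hm
  have hmm' : (m:ℝ) ≤ mr := by rw [hmrdef]; exact_mod_cast hm'
  have hmpos : (0:ℝ) < (m : ℝ) := by linarith
  have hmrpos : (0:ℝ) < mr := by linarith
  -- Hölder bound with the seminorm
  obtain ⟨C, hC⟩ := hHol
  have hwc : ∀ s t : ℝ, 0 ≤ s → s ≤ t → t ≤ T → ‖w t - w s‖ ≤ c * (t - s) ^ α := by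
    intro s t hs hst htT
    rcases eq_or_lt_of_le hst with rfl | hlt
    · simp [Real.zero_rpow (ne_of_gt hα)]
    · have hpow : (0:ℝ) < (t - s) ^ α := Real.rpow_pos_of_pos (by linarith) α
      have hbdd : BddAbove {x : ℝ | ∃ s t : ℝ, 0 ≤ s ∧ s < t ∧ t ≤ T ∧
          x = ‖w t - w s‖ / (t - s) ^ α} := by
        refine ⟨C, ?_⟩
        rintro x ⟨s', t', hs', hst', ht', rfl⟩
        have hp : (0:ℝ) < (t' - s') ^ α := Real.rpow_pos_of_pos (by linarith) α
        rw [div_le_iff₀ hp]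
        exact hC s' t' hs' hst'.le ht'
      have hmem : ‖w t - w s‖ / (t - s) ^ α ∈ {x : ℝ | ∃ s t : ℝ, 0 ≤ s ∧ s < t ∧ t ≤ T ∧
          x = ‖w t - w s‖ / (t - s) ^ α} := ⟨s, t, hs, hlt, htT, rfl⟩
      have hle : ‖w t - w s‖ / (t - s) ^ α ≤ c := le_csSup hbdd hmem
      calc ‖w t - w s‖ = ‖w t - w s‖ / (t - s) ^ α * (t - s) ^ α := by field_simp
        _ ≤ c * (t - s) ^ α := mul_le_mul_of_nonneg_right hle hpow.le
  have hc0 : 0 < c := by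
    rcases lt_or_ge 0 c with h | h
    · exact h
    · exfalso
      have hco : (0:ℝ) ≤ 12 * Real.exp L / (m:ℝ) ^ α := by positivity
      have hle : ε ≤ 0 := by
        rw [hεval]; exact mul_nonpos_of_nonneg_of_nonpos hco h
      linarith
  have hGcont : ContinuousOn (fun τ => Metric.infDist (ξ τ) (closure D)) (Set.Icc 0 T) :=
    (continuous_infDist_pt _).comp_continuousOn hξc
  set τu := u / mr with hτudef
  set τt := t / mr with hτtdef
  have hτu0 : 0 < τu := div_pos hu0 hmrpos
  have hτuτt : τu ≤ τt := by
    rw [hτudef, hτtdef]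
    gcongr
    exact ht.1
  have hτtT : τt ≤ T := by rw [hτtdef, div_le_iff₀ hmrpos]; linarith [ht.2]
  have hIccsub : Set.Icc τu τt ⊆ Set.Icc 0 T := Set.Icc_subset_Icc hτu0.le hτtT
  show Metric.infDist (ξ τt) (closure D) < ε
  by_contra hcon
  push_neg at hcon
  -- first hitting time of ε
  set S := Set.Icc τu τt ∩ (fun τ => Metric.infDist (ξ τ) (closure D)) ⁻¹' {ε} with hSdef
  have hScl : IsClosed S :=
    (hGcont.mono hIccsub).preimage_isClosed_of_isClosed isClosed_Icc isClosed_singleton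
  have hSne : S.Nonempty := by
    have hsub2 := intermediate_value_Icc hτuτt (hGcont.mono hIccsub)
    have hεmem : ε ∈ Set.Icc (Metric.infDist (ξ τu) (closure D))
        (Metric.infDist (ξ τt) (closure D)) := by
      constructor
      · rw [hhit]; linarith [hε1]
      · exact hcon
    obtain ⟨σ₀, hσ₀, hσ₀e⟩ := hsub2 hεmem
    exact ⟨σ₀, hσ₀, hσ₀e⟩
  have hSbdd : BddBelow S := ⟨τu, fun x hx => hx.1.1⟩
  set σ := sInf S with hσdef
  have hσS : σ ∈ S := hScl.csInf_mem hSne hSbdd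
  have hσIcc : σ ∈ Set.Icc τu τt := hσS.1
  have hσε : Metric.infDist (ξ σ) (closure D) = ε := hσS.2
  have hτuσ : τu < σ := by
    rcases eq_or_lt_of_le hσIcc.1 with he | h
    · exfalso; rw [← he, hhit] at hσε; linarith [hε1]
    · exact h
  have hσT : σ ≤ T := le_trans hσIcc.2 hτtT
  have hbefore : ∀ τ ∈ Set.Ico τu σ, Metric.infDist (ξ τ) (closure D) < ε := by
    intro τ hτ
    rcases lt_or_ge (Metric.infDist (ξ τ) (closure D)) ε with h | hge
    · exact h
    · exfalso
      have hτIcc : Set.Icc τu τ ⊆ Set.Icc 0 T :=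
        subset_trans (Set.Icc_subset_Icc le_rfl (le_trans hτ.2.le hσIcc.2)) hIccsub
      have hsub3 := intermediate_value_Icc hτ.1 (hGcont.mono hτIcc)
      have hεmem2 : ε ∈ Set.Icc (Metric.infDist (ξ τu) (closure D))
          (Metric.infDist (ξ τ) (closure D)) := ⟨by rw [hhit]; linarith [hε1], hge⟩
      obtain ⟨τ₂, hτ₂, hτ₂e⟩ := hsub3 hεmem2
      have hτ₂S : τ₂ ∈ S :=
        ⟨⟨hτ₂.1, le_trans hτ₂.2 (le_trans hτ.2.le hσIcc.2)⟩, hτ₂e⟩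
      have h1 : σ ≤ τ₂ := csInf_le hSbdd hτ₂S
      linarith [hτ₂.2, hτ.2]
  -- the window
  set a := max τu (σ - 1 / mr) with hadef
  have haτu : τu ≤ a := le_max_left _ _
  have hmrinv : (0:ℝ) < 1 / mr := by positivity
  have haσ : a < σ := by
    rw [hadef]
    apply max_lt hτuσ
    linarith
  have hha : σ - a ≤ 1 / mr := by
    have := le_max_right τu (σ - 1 / mr)
    rw [← hadef] at this
    linarith
  have hGa : Metric.infDist (ξ a) (closure D) < ε := hbefore a ⟨haτu, haσ⟩
  have ha0 : 0 < a := lt_of_lt_of_le hτu0 haτu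
  have haT : a ∈ Set.Icc 0 T := ⟨ha0.le, le_trans haσ.le hσT⟩
  have hσ0T : σ ∈ Set.Icc 0 T := ⟨le_trans ha0.le haσ.le, hσT⟩
  -- Picard–Lindelöf: the gradient flow on the window
  obtain ⟨M, hM⟩ := hU.2.2.2.1
  have hM0 : 0 ≤ M := le_trans (norm_nonneg _) (hM 0)
  have hLip := hU.2.2.2.2
  have hnorm_mr2 : ‖-(mr / 2)‖ = mr / 2 := by
    rw [norm_neg, Real.norm_eq_abs, abs_of_nonneg (by linarith)]
  have hfieldLip : LipschitzWith (Real.toNNReal (mr * L))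
      (fun x : Euc d => -(mr / 2) • gradient U x) := by
    apply LipschitzWith.of_dist_le_mul
    intro x y
    have h1 := hLip.dist_le_mul x y
    have h2L : ((Real.toNNReal (2 * L)) : ℝ) = 2 * L :=
      Real.coe_toNNReal _ (by linarith)
    rw [h2L] at h1
    have hmrL : ((Real.toNNReal (mr * L)) : ℝ) = mr * L :=
      Real.coe_toNNReal _ (mul_nonneg hmrpos.le hL.le)
    rw [hmrL, dist_smul₀, hnorm_mr2]
    calc mr / 2 * dist (gradient U x) (gradient U y)
        ≤ mr / 2 * (2 * L * dist x y) := by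
          apply mul_le_mul_of_nonneg_left h1 (by linarith)
      _ = mr * L * dist x y := by ring
  have hprod0 : (0:ℝ) ≤ mr / 2 * M * (σ - a) :=
    mul_nonneg (mul_nonneg (by linarith) hM0) (sub_nonneg.mpr haσ.le)
  have hRnn : (0:ℝ) ≤ mr / 2 * M * (σ - a) + 1 := by linarith
  have hCR : mr / 2 * M * max (σ - a) (a - a) ≤ mr / 2 * M * (σ - a) + 1 := by
    rw [sub_self, max_eq_left (sub_nonneg.mpr haσ.le)]
    linarith
  have hnle : ∀ (s : ℝ), s ∈ Set.Icc a σ → ∀ x ∈ Metric.closedBall (ξ a) (mr / 2 * M * (σ - a) + 1),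
      ‖-(mr / 2) • gradient U x‖ ≤ mr / 2 * M := by
    intro s _ x _
    rw [norm_smul, hnorm_mr2]
    exact mul_le_mul_of_nonneg_left (hM x) (by linarith)
  have hpl : IsPicardLindelof (fun (_ : ℝ) (x : Euc d) => -(mr / 2) • gradient U x)
      (tmin := a) (tmax := σ) ⟨a, Set.left_mem_Icc.mpr haσ.le⟩ (ξ a)
      ⟨mr / 2 * M * (σ - a) + 1, hRnn⟩ 0 ⟨mr / 2 * M, mul_nonneg (by linarith) hM0⟩
      (Real.toNNReal (mr * L)) :=
    { lipschitzOnWith := fun t _ => hfieldLip.lipschitzOnWith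
      continuousOn := fun x _ => continuousOn_const
      norm_le := hnle
      mul_max_le := by
        show mr / 2 * M * max (σ - a) (a - a) ≤ (mr / 2 * M * (σ - a) + 1) - ((0 : NNReal) : ℝ)
        rw [NNReal.coe_zero, sub_zero]
        exact hCR }
  obtain ⟨η, hηa0, hηd⟩ := hpl.exists_eq_forall_mem_Icc_hasDerivWithinAt₀
  have hηa : η a = ξ a := hηa0
  -- exponential decay of the distance along the flow
  have hdecay := flow_decay hDne hU hmrpos haσ hηd hε2 (by
    rw [hηa]; exact hGa.le)
  rw [hηa] at hdecay
  -- the two cases for the window start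
  have hcase : Metric.infDist (ξ a) (closure D) * Real.exp (-(mr * (σ - a))) ≤ ε / 2 := by
    rcases le_or_gt (σ - 1 / mr) τu with hca | hca
    · have ha_eq : a = τu := by rw [hadef]; exact max_eq_left hca
      have hGa2 : Metric.infDist (ξ a) (closure D) = ε / 2 := by rw [ha_eq]; exact hhit
      rw [hGa2]
      have hexp1 : Real.exp (-(mr * (σ - a))) ≤ 1 :=
        Real.exp_le_one_iff.mpr
          (neg_nonpos.mpr (mul_nonneg hmrpos.le (sub_nonneg.mpr haσ.le)))
      have h9 : (0:ℝ) ≤ ε / 2 := by linarith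
      exact mul_le_of_le_one_right h9 hexp1
    · have ha_eq : a = σ - 1 / mr := by rw [hadef]; exact max_eq_right hca.le
      have hσa : mr * (σ - a) = 1 := by
        rw [ha_eq]
        field_simp
        ring
      rw [hσa]
      have h3 : (2:ℝ) ≤ Real.exp 1 := by
        have := Real.add_one_le_exp 1; linarith
      have h5 : (0:ℝ) < Real.exp 1 := Real.exp_pos 1
      have h4 : Real.exp (-(1:ℝ)) ≤ 1 / 2 := by
        rw [Real.exp_neg, ← one_div]
        exact one_div_le_one_div_of_le (by norm_num) h3
      have h10 : Metric.infDist (ξ a) (closure D) * Real.exp (-(1:ℝ)) ≤ ε * (1 / 2) :=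
        mul_le_mul hGa.le h4 (Real.exp_pos _).le (by linarith)
      linarith
  -- Grönwall comparison between ξ and the flow η on the window
  set P : ℝ → Euc d := fun τ => ∫ s in (0:ℝ)..τ, gradient U (ξ s) with hPdef
  have hVcont : ContinuousOn (fun s => gradient U (ξ s)) (Set.Icc 0 T) :=
    hLip.continuous.comp_continuousOn hξc
  have hVio : IntegrableOn (fun s => gradient U (ξ s)) (Set.Icc 0 T) volume :=
    hVcont.integrableOn_Icc
  have hPcont : ContinuousOn P (Set.Icc 0 T) := by
    have h := intervalIntegral.continuousOn_primitive_interval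
      (a := 0) (b := T) (μ := volume) (f := fun s => gradient U (ξ s))
      (by rwa [Set.uIcc_of_le hT.le])
    rwa [Set.uIcc_of_le hT.le] at h
  have hηcont : ContinuousOn η (Set.Icc a σ) := fun τ hτ => (hηd τ hτ).continuousWithinAt
  have hξeq' : ∀ τ ∈ Set.Icc 0 T, ξ τ = x₀ + w τ - (mr / 2) • P τ := by
    intro τ hτ
    exact hξeq τ hτ
  have hsubaσ : Set.Icc a σ ⊆ Set.Icc 0 T := Set.Icc_subset_Icc ha0.le hσT
  have hfcont : ContinuousOn (fun τ => x₀ + w a - (mr / 2) • P τ - η τ) (Set.Icc a σ) :=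
    (continuousOn_const.sub ((hPcont.mono hsubaσ).const_smul (mr / 2))).sub hηcont
  have hPd : ∀ τ ∈ Set.Ico a σ, HasDerivAt P (gradient U (ξ τ)) τ := by
    intro τ hτ
    have hτT : τ ∈ Set.Ioo 0 T := ⟨lt_of_lt_of_le ha0 hτ.1, lt_of_lt_of_le hτ.2 hσT⟩
    have hint : IntervalIntegrable (fun s => gradient U (ξ s)) volume 0 τ := by
      apply ContinuousOn.intervalIntegrable
      apply hVcont.mono
      rw [Set.uIcc_of_le hτT.1.le]
      exact Set.Icc_subset_Icc le_rfl hτT.2.le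
    have hmeas := (hVcont.mono Set.Ioo_subset_Icc_self).stronglyMeasurableAtFilter
      isOpen_Ioo (μ := volume) τ hτT
    have hca : ContinuousAt (fun s => gradient U (ξ s)) τ :=
      hVcont.continuousAt (Icc_mem_nhds hτT.1 hτT.2)
    exact intervalIntegral.integral_hasDerivAt_right hint hmeas hca
  have hfd : ∀ τ ∈ Set.Ico a σ,
      HasDerivWithinAt (fun τ => x₀ + w a - (mr / 2) • P τ - η τ)
        (-(mr / 2) • (gradient U (ξ τ) - gradient U (η τ))) (Set.Ici τ) τ := by
    intro τ hτ
    have hP := ((hPd τ hτ).hasDerivWithinAt (s := Set.Ici τ)).const_smul (mr / 2)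
    have hη' : HasDerivWithinAt η (-(mr / 2) • gradient U (η τ)) (Set.Ici τ) τ :=
      (hηd τ (Set.Ico_subset_Icc_self hτ)).mono_of_mem_nhdsWithin (Icc_mem_nhdsGE_of_mem hτ)
    have hcomb := ((hasDerivWithinAt_const τ (Set.Ici τ) (x₀ + w a)).sub hP).sub hη'
    refine hcomb.congr_deriv ?_
    module
  have hfa0 : ‖x₀ + w a - (mr / 2) • P a - η a‖ ≤ 0 := by
    have h2 : x₀ + w a - (mr / 2) • P a - η a = ξ a - η a - (w a - w a) := by
      rw [hξeq' a haT]; abel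
    rw [h2, hηa]
    simp
  have hwin : ∀ τ ∈ Set.Icc a σ, ‖w τ - w a‖ ≤ c * (1 / mr) ^ α := by
    intro τ hτ
    have h5 := hwc a τ ha0.le hτ.1 (le_trans hτ.2 hσT)
    have h6 : (τ - a) ^ α ≤ (1 / mr) ^ α :=
      Real.rpow_le_rpow (by linarith [hτ.1]) (by linarith [hτ.2, hha]) hα.le
    calc ‖w τ - w a‖ ≤ c * (τ - a) ^ α := h5
      _ ≤ c * (1 / mr) ^ α := mul_le_mul_of_nonneg_left h6 hc0.le
  have hmrL0 : (0:ℝ) ≤ mr * L := mul_nonneg hmrpos.le hL.le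
  have hbound : ∀ τ ∈ Set.Ico a σ,
      ‖-(mr / 2) • (gradient U (ξ τ) - gradient U (η τ))‖
        ≤ mr * L * ‖x₀ + w a - (mr / 2) • P τ - η τ‖ + mr * L * (c * (1 / mr) ^ α) := by
    intro τ hτ
    have hτIcc : τ ∈ Set.Icc 0 T := ⟨le_trans ha0.le hτ.1, le_trans hτ.2.le hσT⟩
    have h1 : ‖gradient U (ξ τ) - gradient U (η τ)‖ ≤ 2 * L * ‖ξ τ - η τ‖ := by
      have hd := hLip.dist_le_mul (ξ τ) (η τ)
      have h2L : ((Real.toNNReal (2 * L)) : ℝ) = 2 * L :=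
        Real.coe_toNNReal _ (by linarith)
      rw [h2L, dist_eq_norm, dist_eq_norm] at hd
      exact hd
    have h2 : ξ τ - η τ = x₀ + w a - (mr / 2) • P τ - η τ + (w τ - w a) := by
      rw [hξeq' τ hτIcc]; abel
    have h3 : ‖ξ τ - η τ‖ ≤ ‖x₀ + w a - (mr / 2) • P τ - η τ‖ + ‖w τ - w a‖ := by
      rw [h2]; exact norm_add_le _ _
    have h4 : ‖w τ - w a‖ ≤ c * (1 / mr) ^ α := hwin τ (Set.Ico_subset_Icc_self hτ)
    rw [norm_smul, hnorm_mr2]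
    calc mr / 2 * ‖gradient U (ξ τ) - gradient U (η τ)‖
        ≤ mr / 2 * (2 * L * ‖ξ τ - η τ‖) :=
          mul_le_mul_of_nonneg_left h1 (by linarith)
      _ = mr * L * ‖ξ τ - η τ‖ := by ring
      _ ≤ mr * L * (‖x₀ + w a - (mr / 2) • P τ - η τ‖ + ‖w τ - w a‖) :=
          mul_le_mul_of_nonneg_left h3 hmrL0
      _ ≤ mr * L * ‖x₀ + w a - (mr / 2) • P τ - η τ‖ + mr * L * (c * (1 / mr) ^ α) := by
          rw [mul_add]
          exact (add_le_add_iff_left _).mpr (mul_le_mul_of_nonneg_left h4 hmrL0)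
  have hgron := norm_le_gronwallBound_of_norm_deriv_right_le hfcont hfd hfa0 hbound σ
    (Set.right_mem_Icc.mpr haσ.le)
  have hKne : mr * L ≠ 0 := ne_of_gt (mul_pos hmrpos hL)
  have hgb : gronwallBound 0 (mr * L) (mr * L * (c * (1 / mr) ^ α)) (σ - a)
      = c * (1 / mr) ^ α * (Real.exp (mr * L * (σ - a)) - 1) := by
    simp only [gronwallBound_of_K_ne_0 hKne]
    rw [zero_mul, zero_add, mul_div_cancel_left₀ _ hKne]
  rw [hgb] at hgron
  have hexpL : Real.exp (mr * L * (σ - a)) ≤ Real.exp L := by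
    apply Real.exp_le_exp.mpr
    calc mr * L * (σ - a) ≤ mr * L * (1 / mr) := mul_le_mul_of_nonneg_left hha hmrL0
      _ = L := by field_simp
  have hB0 : (0:ℝ) ≤ c * (1 / mr) ^ α :=
    mul_nonneg hc0.le (Real.rpow_nonneg (by positivity) α)
  have herr : ‖ξ σ - η σ‖ ≤ c * (1 / mr) ^ α * Real.exp L := by
    have h2 : ξ σ - η σ = x₀ + w a - (mr / 2) • P σ - η σ + (w σ - w a) := by
      rw [hξeq' σ hσ0T]; abel
    have h3 : ‖w σ - w a‖ ≤ c * (1 / mr) ^ α :=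
      hwin σ (Set.right_mem_Icc.mpr haσ.le)
    calc ‖ξ σ - η σ‖ ≤ ‖x₀ + w a - (mr / 2) • P σ - η σ‖ + ‖w σ - w a‖ := by
          rw [h2]; exact norm_add_le _ _
      _ ≤ c * (1 / mr) ^ α * (Real.exp (mr * L * (σ - a)) - 1) + c * (1 / mr) ^ α := by
          linarith [hgron, h3]
      _ = c * (1 / mr) ^ α * Real.exp (mr * L * (σ - a)) := by ring
      _ ≤ c * (1 / mr) ^ α * Real.exp L := mul_le_mul_of_nonneg_left hexpL hB0
  have hBm : c * (1 / mr) ^ α ≤ c * (1 / (m:ℝ)) ^ α := by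
    apply mul_le_mul_of_nonneg_left _ hc0.le
    apply Real.rpow_le_rpow (by positivity) _ hα.le
    exact one_div_le_one_div_of_le hmpos hmm'
  have hεq : c * (1 / (m:ℝ)) ^ α * Real.exp L = ε / 12 := by
    rw [hεval, Real.div_rpow (by norm_num) hmpos.le, Real.one_rpow]
    have hmα : ((m:ℝ) ^ α) ≠ 0 := ne_of_gt (Real.rpow_pos_of_pos hmpos α)
    field_simp
  have herr2 : ‖ξ σ - η σ‖ ≤ ε / 12 := by
    calc ‖ξ σ - η σ‖ ≤ c * (1 / mr) ^ α * Real.exp L := herr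
      _ ≤ c * (1 / (m:ℝ)) ^ α * Real.exp L :=
          mul_le_mul_of_nonneg_right hBm (Real.exp_pos L).le
      _ = ε / 12 := hεq
  -- conclusion
  have hfinal : Metric.infDist (ξ σ) (closure D)
      ≤ Metric.infDist (η σ) (closure D) + dist (ξ σ) (η σ) :=
    Metric.infDist_le_infDist_add_dist
  rw [hσε, dist_eq_norm] at hfinal
  linarith [hdecay, hcase, herr2, hε1, hfinal]

end
end

section
/- Suppose D satisfies Conditions (A) and (B), U is a penalty function for D with constant L, w : [0,T] → ℝ^d is α-Hölder continuous with w₀ = 0, x₀ ∈ D̄, and m ≥ 1 is an integer with 0 < ε_m^α(w) < r₀/2. Then for every integer m' ≥ m and every t ∈ [0,T], dist(ξ^{m'}_t, D̄) < ε_m^α(w). -/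
open Set Metric MeasureTheory Filter

open Topology

noncomputable section

lemma two_exp_gt (L : ℝ) (hL : 0 < L) : (L+1)^2 < 2*Real.exp L := by
  have h1 : 1 + L/3 < Real.exp (L/3) := by
    have := Real.add_one_lt_exp (x := L/3) (by positivity)
    linarith
  have h0 : (0:ℝ) < 1 + L/3 := by positivity
  have h2 : (1 + L/3)^3 < (Real.exp (L/3))^3 := by
    exact pow_lt_pow_left₀ h1 h0.le (by norm_num)
  have h3 : (Real.exp (L/3))^3 = Real.exp L := by
    rw [← Real.exp_nat_mul]; ring_nf
  nlinarith [sq_nonneg (L - 3), hL.le]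

lemma abs_infDist_sub {d : ℕ} (s : Set (Euc d)) (x y : Euc d) :
    |Metric.infDist x s - Metric.infDist y s| ≤ dist x y := by
  rw [abs_sub_le_iff]
  constructor
  · have := Metric.infDist_le_infDist_add_dist (x := x) (y := y) (s := s)
    linarith
  · have := Metric.infDist_le_infDist_add_dist (x := y) (y := x) (s := s)
    rw [dist_comm] at this
    linarith

lemma grad_formula {d : ℕ} {D : Set (Euc d)} (hDne : D.Nonempty) {r₀ L : ℝ}
    {U : Euc d → ℝ} (hU : IsPenalty D r₀ L U) (hr₀ : 0 < r₀) {x : Euc d}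
    (hx : Metric.infDist x (closure D) < r₀ / 2) :
    ∃ p ∈ closure D, dist x p = Metric.infDist x (closure D) ∧
      gradient U x = (2:ℝ) • (x - p) := by
  obtain ⟨hC1, hC0, hCq, -, hClip⟩ := hU
  set ρx := Metric.infDist x (closure D) with hρx
  have hρnn : 0 ≤ ρx := Metric.infDist_nonneg
  rcases eq_or_lt_of_le hρnn with hzero | hpos
  · -- x ∈ closure D, gradient is zero
    have hxmem : x ∈ closure D := by
      rw [isClosed_closure.mem_iff_infDist_zero hDne.closure]
      exact hzero.symm
    refine ⟨x, hxmem, by simp [← hzero], ?_⟩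
    have hmin : IsLocalMin U x := by
      have hUx : U x = 0 := by
        rw [hCq x (by rw [← hρx, ← hzero]; positivity)]
        rw [← hρx, ← hzero]; norm_num
      exact Filter.Eventually.of_forall (fun y => by rw [hUx]; exact hC0 y)
    have : fderiv ℝ U x = 0 := hmin.fderiv_eq_zero
    simp [gradient, this]
  · -- positive distance case
    obtain ⟨p, hpmem, hpd⟩ := isClosed_closure.exists_infDist_eq_dist hDne.closure x
    rw [← hρx] at hpd
    have hxp : ‖x - p‖ = ρx := by rw [← dist_eq_norm]; exact hpd.symm
    set n : Euc d := (ρx)⁻¹ • (x - p) with hn_def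
    have hρne : ρx ≠ 0 := ne_of_gt hpos
    have hn : ‖n‖ = 1 := by
      rw [hn_def, norm_smul, hxp, Real.norm_eq_abs, abs_of_nonneg (inv_nonneg.mpr hρnn)]
      field_simp
    have hUdiff : DifferentiableAt ℝ U x := (hC1.differentiable one_ne_zero).differentiableAt
    -- Step 1 : ‖fderiv‖ ≤ 2 ρx
    have hnormle : ‖fderiv ℝ U x‖ ≤ 2 * ρx := by
      refine le_of_forall_pos_le_add (fun ε' hε' => ?_)
      set η : ℝ := min ε' (r₀/2 - ρx) with hη_def
      have hηpos : 0 < η := lt_min hε' (by linarith)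
      refine hUdiff.hasFDerivAt.le_of_lip' (by positivity) ?_
      filter_upwards [Metric.ball_mem_nhds x hηpos] with y hy
      have hdist : dist y x < η := Metric.mem_ball.mp hy
      have hρy : |Metric.infDist y (closure D) - ρx| ≤ dist y x := abs_infDist_sub _ _ _
      have hρyle : Metric.infDist y (closure D) ≤ r₀ / 2 := by
        have h1 : η ≤ r₀/2 - ρx := min_le_right _ _
        have := abs_le.mp hρy
        linarith
      have hUy : U y = Metric.infDist y (closure D) ^ 2 := hCq y hρyle
      have hUx : U x = ρx ^ 2 := hCq x (by linarith)
      rw [Real.norm_eq_abs, hUy, hUx]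
      set ρy := Metric.infDist y (closure D) with hρy_def
      have hρynn : 0 ≤ ρy := Metric.infDist_nonneg
      have habs : |ρy ^ 2 - ρx ^ 2| = |ρy - ρx| * (ρy + ρx) := by
        rw [show ρy^2 - ρx^2 = (ρy - ρx) * (ρy + ρx) by ring, abs_mul,
          abs_of_nonneg (by linarith : (0:ℝ) ≤ ρy + ρx)]
      rw [habs]
      have h2 : ρy + ρx ≤ 2 * ρx + ε' := by
        have := abs_le.mp hρy
        have hηε : η ≤ ε' := min_le_left _ _
        linarith
      have h3 : |ρy - ρx| ≤ ‖y - x‖ := by rw [← dist_eq_norm]; exact hρy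
      calc |ρy - ρx| * (ρy + ρx) ≤ ‖y - x‖ * (2 * ρx + ε') := by
            apply mul_le_mul h3 h2 (by linarith) (norm_nonneg _)
        _ = (2 * ρx + ε') * ‖y - x‖ := by ring
    -- Step 2 : directional derivative along n
    have hval : ∀ σ ∈ Icc (0:ℝ) ρx, U (x - σ • n) = (ρx - σ)^2 := by
      intro σ hσ
      obtain ⟨hσ0, hσρ⟩ := hσ
      have hveq : x - σ • n - p = (1 - σ * ρx⁻¹) • (x - p) := by
        rw [hn_def, smul_smul, sub_smul, one_smul]; abel
      have hdist : dist (x - σ • n) p = ρx - σ := by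
        rw [dist_eq_norm, hveq, norm_smul, hxp, Real.norm_eq_abs, abs_of_nonneg]
        · field_simp
        · have : σ * ρx⁻¹ ≤ 1 := by
            rw [← div_eq_mul_inv, div_le_one hpos]; exact hσρ
          linarith
      have hub : Metric.infDist (x - σ • n) (closure D) ≤ ρx - σ := by
        rw [← hdist]; exact Metric.infDist_le_dist_of_mem hpmem
      have hlb : ρx - σ ≤ Metric.infDist (x - σ • n) (closure D) := by
        have h1 : ρx ≤ Metric.infDist (x - σ • n) (closure D) + dist x (x - σ • n) :=
          Metric.infDist_le_infDist_add_dist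
        have h2 : dist x (x - σ • n) = σ := by
          rw [dist_eq_norm, show x - (x - σ • n) = σ • n by abel, norm_smul, hn,
            Real.norm_eq_abs, abs_of_nonneg hσ0, mul_one]
        linarith
      have heq : Metric.infDist (x - σ • n) (closure D) = ρx - σ := le_antisymm hub hlb
      rw [hCq _ (by linarith), heq]
    have hφ : HasDerivAt (fun σ : ℝ => x - σ • n) (-n) 0 := by
      have h1 : HasDerivAt (fun σ : ℝ => σ • n) n 0 := by
        simpa using (hasDerivAt_id (0:ℝ)).smul_const n
      simpa using h1.const_sub x
    have hcomp : HasDerivAt (fun σ : ℝ => U (x - σ • n)) (fderiv ℝ U x (-n)) 0 := by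
      have := hUdiff.hasFDerivAt.comp_hasDerivAt_of_eq (x := (0:ℝ)) hφ (by simp)
      simpa [Function.comp_def] using this
    have hpoly : HasDerivAt (fun σ : ℝ => (ρx - σ)^2) (-(2*ρx)) 0 := by
      have h1 : HasDerivAt (fun σ : ℝ => ρx - σ) (-1) 0 := by
        simpa using (hasDerivAt_id (0:ℝ)).const_sub ρx
      have h2 := h1.pow 2
      norm_num at h2
      exact h2
    have hW1 : HasDerivWithinAt (fun σ : ℝ => U (x - σ • n)) (fderiv ℝ U x (-n)) (Icc 0 ρx) 0 :=
      hcomp.hasDerivWithinAt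
    have hW2 : HasDerivWithinAt (fun σ : ℝ => U (x - σ • n)) (-(2*ρx)) (Icc 0 ρx) 0 := by
      refine (hpoly.hasDerivWithinAt).congr (fun y hy => (hval y hy)) ?_
      exact hval 0 ⟨le_rfl, hρnn⟩
    have hud : UniqueDiffWithinAt ℝ (Icc (0:ℝ) ρx) 0 :=
      (uniqueDiffOn_Icc hpos) 0 ⟨le_rfl, hρnn⟩
    have huniq : fderiv ℝ U x (-n) = -(2*ρx) := by
      rw [← hW1.derivWithin hud, hW2.derivWithin hud]
    have hfn : fderiv ℝ U x n = 2 * ρx := by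
      have := huniq
      rw [map_neg] at this
      linarith [neg_injective this]
    have hInner : (inner ℝ (gradient U x) n : ℝ) = 2 * ρx := by
      rw [show gradient U x = (InnerProductSpace.toDual ℝ (Euc d)).symm (fderiv ℝ U x) from rfl,
        InnerProductSpace.toDual_symm_apply]
      exact hfn
    have hgnorm : ‖gradient U x‖ ≤ 2 * ρx := by
      rw [show gradient U x = (InnerProductSpace.toDual ℝ (Euc d)).symm (fderiv ℝ U x) from rfl,
        LinearIsometryEquiv.norm_map]
      exact hnormle
    have hsub : gradient U x = (2*ρx) • n := by
      have hns : ‖gradient U x - (2*ρx) • n‖^2 ≤ 0 := by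
        rw [norm_sub_sq_real, real_inner_smul_right, hInner, norm_smul, hn,
          Real.norm_eq_abs, abs_of_nonneg (by positivity : (0:ℝ) ≤ 2*ρx), mul_one]
        nlinarith [norm_nonneg (gradient U x)]
      have h0 := norm_nonneg (gradient U x - (2*ρx) • n)
      have hz : ‖gradient U x - (2*ρx) • n‖ = 0 := by nlinarith
      exact sub_eq_zero.mp (norm_eq_zero.mp hz)
    refine ⟨p, hpmem, hpd.symm, ?_⟩
    rw [hsub, hn_def, smul_smul]
    congr 1
    field_simp


lemma numeric_key {L θ ε q X : ℝ} (hL : 0 < L) (hθ : θ = 1/(2*(L+1)))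
    (hε : ε = 12*Real.exp L*q) (hq : 0 < q) (hX : 0 ≤ X) (hXq : X ≤ q) :
    (X*(1+L*θ) + L*θ^2*ε)/θ + (X*(1+L*θ) + L*θ^2*ε) < ε := by
  have hL1 : (0:ℝ) < L + 1 := by linarith
  have hθpos : 0 < θ := by rw [hθ]; exact one_div_pos.mpr (by linarith)
  have hθle : θ ≤ 1 := by rw [hθ, div_le_one (by linarith)]; linarith
  have hLθ : L*θ ≤ 1/2 := by
    rw [hθ, mul_one_div, div_le_iff₀ (by linarith : (0:ℝ) < 2*(L+1))]; linarith
  have hεpos : 0 < ε := by rw [hε]; exact mul_pos (by positivity) hq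
  set B := X*(1+L*θ) + L*θ^2*ε with hB
  have hBnn : 0 ≤ B := by
    rw [hB]
    exact add_nonneg (mul_nonneg hX (by nlinarith [mul_pos hL hθpos]))
      (mul_nonneg (mul_nonneg hL.le (sq_nonneg θ)) hεpos.le)
  have h2B : 2*B < θ*ε := by
    have ha : L*θ*q ≤ (1/2)*q := mul_le_mul_of_nonneg_right hLθ hq.le
    have hb : (2*(1+L*θ))*X ≤ (2*(1+L*θ))*q :=
      mul_le_mul_of_nonneg_left hXq (by nlinarith [mul_pos hL hθpos])
    have h1 : 2*X*(1+L*θ) ≤ 3*q := by nlinarith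
    have h2 : θ*ε - 2*(L*θ^2*ε) = ε/(2*(L+1)^2) := by rw [hθ]; field_simp; ring
    have h3 : 3*q < ε/(2*(L+1)^2) := by
      rw [hε, lt_div_iff₀ (by nlinarith : (0:ℝ) < 2*(L+1)^2)]
      have hexp := two_exp_gt L hL
      have h5 : 6*q*((L+1)^2) < 6*q*(2*Real.exp L) :=
        mul_lt_mul_of_pos_left hexp (by linarith)
      nlinarith [h5]
    rw [hB]
    linarith [h1, h2, h3]
  have hBle : B ≤ B/θ := by rw [le_div_iff₀ hθpos]; nlinarith
  have h4 : 2*(B/θ) < ε := by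
    rw [show 2*(B/θ) = 2*B/θ by ring, div_lt_iff₀ hθpos]; linarith
  linarith

set_option maxHeartbeats 2000000 in
/-- for every `m' ≥ m`, the penalized solution `ξ^{m'}` stays within
distance `ε_m^α(w)` of `D̄` on the whole of `[0,T]`. -/
theorem penalized_path_stays_in_tube
    (d : ℕ) (hd : 1 ≤ d) (D : Set (Euc d)) (hDne : D.Nonempty) (hDopen : IsOpen D)
    (r₀ δ β : ℝ) (hA : CondA D r₀) (hB : CondB D δ β)
    (L T α : ℝ) (hL : 0 < L) (hT : 0 < T) (hα : 0 < α) (hα2 : α < 1 / 2)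
    (U : Euc d → ℝ) (hU : IsPenalty D r₀ L U)
    (w : ℝ → Euc d) (hw0 : w 0 = 0) (hHol : ∃ C : ℝ, IsHolder w T α C)
    (x₀ : Euc d) (hx₀ : x₀ ∈ closure D)
    (m : ℕ) (hm : 1 ≤ m)
    (hε1 : 0 < epsm w T α L m) (hε2 : epsm w T α L m < r₀ / 2) :
    ∀ m' : ℕ, m ≤ m' → ∀ ξ : ℝ → Euc d, IsPenalizedSol U T w x₀ m' ξ →
      ∀ t ∈ Set.Icc 0 T, Metric.infDist (ξ t) (closure D) < epsm w T α L m := by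
  intro m' hmm' ξ hsol
  obtain ⟨hr₀pos, -⟩ := hA
  obtain ⟨hξcont, hξeq⟩ := hsol
  set ε := epsm w T α L m with hεdef
  set H := holderSemi w T α with hHdef
  have hT0 : (0:ℝ) ≤ T := hT.le
  -- Hölder seminorm facts
  obtain ⟨C, hC⟩ := hHol
  have hbdd : BddAbove {c : ℝ | ∃ s t : ℝ, 0 ≤ s ∧ s < t ∧ t ≤ T ∧
      c = ‖w t - w s‖ / (t - s) ^ α} := by
    refine ⟨C, fun c hc => ?_⟩
    obtain ⟨s, t, hs, hst, htT, rfl⟩ := hc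
    have hpow : (0:ℝ) < (t - s) ^ α := Real.rpow_pos_of_pos (by linarith) α
    rw [div_le_iff₀ hpow]
    exact hC s t hs hst.le htT
  have hHle : ∀ s t : ℝ, 0 ≤ s → s ≤ t → t ≤ T → ‖w t - w s‖ ≤ H * (t - s) ^ α := by
    intro s t hs hst htT
    rcases eq_or_lt_of_le hst with rfl | hlt
    · simp [Real.zero_rpow (ne_of_gt hα)]
    · have hmem : ‖w t - w s‖ / (t - s) ^ α ∈ {c : ℝ | ∃ s t : ℝ, 0 ≤ s ∧ s < t ∧ t ≤ T ∧
          c = ‖w t - w s‖ / (t - s) ^ α} := ⟨s, t, hs, hlt, htT, rfl⟩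
      have hle := le_csSup hbdd hmem
      have hpow : (0:ℝ) < (t - s) ^ α := Real.rpow_pos_of_pos (by linarith) α
      rw [div_le_iff₀ hpow] at hle
      exact hle
  have hm0 : (0:ℝ) < m := by exact_mod_cast hm
  have hm'1 : 1 ≤ m' := le_trans hm hmm'
  have hm'0 : (0:ℝ) < m' := by exact_mod_cast hm'1
  have hmm : (m:ℝ) ≤ (m':ℝ) := by exact_mod_cast hmm'
  have hmα : (0:ℝ) < (m:ℝ) ^ α := Real.rpow_pos_of_pos hm0 α
  have hHpos : 0 < H := by
    rcases lt_or_ge 0 H with h | h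
    · exact h
    · exfalso
      have hfac : (0:ℝ) < 12 * Real.exp L / (m:ℝ) ^ α :=
        div_pos (by positivity) hmα
      have : epsm w T α L m ≤ 0 := mul_nonpos_of_nonneg_of_nonpos hfac.le h
      rw [← hεdef] at this
      linarith [hε1]
  have hεpos : 0 < ε := hε1
  set θ : ℝ := 1 / (2*(L+1)) with hθdef
  have hL1 : (0:ℝ) < L + 1 := by linarith
  have hθpos : 0 < θ := by rw [hθdef]; exact one_div_pos.mpr (by linarith)
  have hθle : θ ≤ 1 := by
    rw [hθdef, div_le_one (by linarith)]; linarith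
  have hLθ : L * θ ≤ 1/2 := by
    rw [hθdef, mul_one_div, div_le_iff₀ (by linarith : (0:ℝ) < 2*(L+1))]
    linarith
  set Δ : ℝ := θ / m' with hΔdef
  have hΔpos : 0 < Δ := div_pos hθpos hm'0
  have hm'Δ : (m':ℝ) * Δ = θ := by
    rw [hΔdef]; field_simp
  set q : ℝ := H / (m:ℝ)^α with hqdef
  have hqpos : 0 < q := div_pos hHpos hmα
  have hεq : ε = 12 * Real.exp L * q := by
    rw [hεdef]; simp only [epsm]; rw [← hHdef, hqdef]; ring
  have hΔle : Δ ≤ 1/(m:ℝ) := by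
    rw [hΔdef]
    exact div_le_div₀ (by norm_num) hθle hm0 hmm
  have hΔα : Δ ^ α ≤ 1 / (m:ℝ)^α := by
    calc Δ^α ≤ ((1:ℝ)/(m:ℝ))^α := Real.rpow_le_rpow hΔpos.le hΔle hα.le
    _ = 1/(m:ℝ)^α := by
        rw [Real.div_rpow (by norm_num) (Nat.cast_nonneg m), Real.one_rpow]
  have hΔαnn : 0 ≤ Δ^α := Real.rpow_nonneg hΔpos.le α
  have hHΔ : H * Δ^α ≤ q := by
    rw [hqdef]
    calc H * Δ^α ≤ H * (1/(m:ℝ)^α) := by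
          exact mul_le_mul_of_nonneg_left hΔα hHpos.le
    _ = H/(m:ℝ)^α := by ring
  set B : ℝ := H * Δ^α * (1 + L*θ) + L * θ^2 * ε with hBdef
  have hBnn : 0 ≤ B := by
    rw [hBdef]
    exact add_nonneg (mul_nonneg (mul_nonneg hHpos.le hΔαnn)
        (by nlinarith [mul_pos hL hθpos]))
      (mul_nonneg (mul_nonneg hL.le (sq_nonneg θ)) hεpos.le)
  have hnum : B/θ + B < ε := by
    rw [hBdef]
    exact numeric_key hL hθdef hεq hqpos (mul_nonneg hHpos.le hΔαnn) hHΔ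
  -- contradiction setup
  by_contra hcon
  push_neg at hcon
  obtain ⟨t₀, ht₀, hge⟩ := hcon
  set f : ℝ → ℝ := fun u => Metric.infDist (ξ u) (closure D) with hfdef
  have hfnn : ∀ u, 0 ≤ f u := fun u => Metric.infDist_nonneg
  have hfcont : ContinuousOn f (Icc 0 T) :=
    (Metric.continuous_infDist_pt (closure D)).comp_continuousOn hξcont
  have hξ0 : ξ 0 = x₀ := by
    have h := hξeq 0 ⟨le_rfl, hT0⟩
    simpa [hw0, intervalIntegral.integral_same] using h
  have hf0 : f 0 = 0 := by
    show Metric.infDist (ξ 0) (closure D) = 0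
    rw [hξ0]
    exact Metric.infDist_zero_of_mem hx₀
  set A : Set ℝ := {u | u ∈ Icc 0 T ∧ ε ≤ f u} with hAdef
  have hAne : A.Nonempty := ⟨t₀, ht₀, hge⟩
  have hAbdd : BddBelow A := ⟨0, fun u hu => hu.1.1⟩
  have hAclosed : IsClosed A := by
    have h := hfcont.preimage_isClosed_of_isClosed isClosed_Icc (isClosed_Ici (a := ε))
    have : A = Icc 0 T ∩ f ⁻¹' Ici ε := by
      ext u; simp [hAdef, Set.mem_preimage, Set.mem_Ici, and_comm]
    rw [this]; exact h
  set t₂ := sInf A with ht₂def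
  have ht₂A : t₂ ∈ A := hAclosed.csInf_mem hAne hAbdd
  obtain ⟨ht₂mem, hεt₂⟩ := ht₂A
  have ht₂T : t₂ ≤ T := ht₂mem.2
  have ht₂pos : 0 < t₂ := by
    rcases eq_or_lt_of_le ht₂mem.1 with h | h
    · exfalso; rw [← h, hf0] at hεt₂; linarith
    · exact h
  have hlt : ∀ u, 0 ≤ u → u < t₂ → f u < ε := by
    intro u hu hut
    by_contra hge2
    push_neg at hge2
    exact notMem_of_lt_csInf hut hAbdd ⟨⟨hu, le_trans hut.le ht₂T⟩, hge2⟩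
  have hfle : ∀ u ∈ Icc 0 t₂, f u ≤ ε := by
    rintro u ⟨hu0, hu2⟩
    rcases lt_or_eq_of_le hu2 with h | heq
    · exact (hlt u hu0 h).le
    · rw [heq]
      set useq : ℕ → ℝ := fun k => max 0 (t₂ - 1/((k:ℝ)+1)) with husdef
      have husmem : ∀ k, useq k ∈ Icc 0 T := by
        intro k
        have h0 : (0:ℝ) < 1/((k:ℝ)+1) := by positivity
        exact ⟨le_max_left _ _, max_le hT0 (by linarith [ht₂T])⟩
      have huslt : ∀ k, useq k < t₂ := by
        intro k
        have h1 : (0:ℝ) < 1/((k:ℝ)+1) := by positivity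
        exact max_lt ht₂pos (by linarith)
      have hustend : Tendsto useq atTop (𝓝 t₂) := by
        have h1 : Tendsto (fun k : ℕ => t₂ - 1/((k:ℝ)+1)) atTop (𝓝 (t₂ - 0)) :=
          tendsto_const_nhds.sub tendsto_one_div_add_atTop_nhds_zero_nat
        rw [sub_zero] at h1
        have h2 := (tendsto_const_nhds (x := (0:ℝ)) (f := atTop (α := ℕ))).max h1
        rwa [max_eq_right ht₂pos.le] at h2
      have hftend : Tendsto (fun k => f (useq k)) atTop (𝓝 (f t₂)) := by
        have hcw : ContinuousWithinAt f (Icc 0 T) t₂ := hfcont t₂ ht₂mem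
        exact hcw.tendsto.comp
          (tendsto_nhdsWithin_of_tendsto_nhds_of_eventually_within useq hustend
            (Eventually.of_forall husmem))
      exact le_of_tendsto hftend
        (Eventually.of_forall fun k => (hlt _ (le_max_left _ _) (huslt k)).le)
  -- gradient tools
  have hproj : ∀ u ∈ Icc 0 t₂, ∃ p ∈ closure D, dist (ξ u) p = f u ∧
      gradient U (ξ u) = (2:ℝ) • (ξ u - p) := by
    intro u hu
    exact grad_formula hDne hU hr₀pos (lt_of_le_of_lt (hfle u hu) hε2)
  set G : ℝ → Euc d := fun u => gradient U (ξ u) with hGdef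
  have hGcont : ContinuousOn G (Icc 0 T) :=
    (hU.2.2.2.2.continuous).comp_continuousOn hξcont
  have hGint : ∀ a b, a ∈ Icc 0 T → b ∈ Icc 0 T → IntervalIntegrable G volume a b := by
    intro a b ha hb
    apply ContinuousOn.intervalIntegrable
    apply hGcont.mono
    rw [show Icc (0:ℝ) T = Set.uIcc 0 T from (Set.uIcc_of_le hT0).symm]
    exact Set.uIcc_subset_uIcc (by rw [Set.uIcc_of_le hT0]; exact ha)
      (by rw [Set.uIcc_of_le hT0]; exact hb)
  have hGbound : ∀ u ∈ Icc 0 t₂, ‖G u‖ ≤ 2*ε := by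
    intro u hu
    obtain ⟨p, hp, hdp, hg⟩ := hproj u hu
    show ‖gradient U (ξ u)‖ ≤ 2*ε
    rw [hg, norm_smul, Real.norm_eq_abs]
    rw [show |(2:ℝ)| = 2 by norm_num]
    rw [← dist_eq_norm, hdp]
    have := hfle u hu
    linarith
  have hdiff : ∀ a b, a ∈ Icc 0 T → b ∈ Icc 0 T → a ≤ b →
      ξ b - ξ a = (w b - w a) - ((m':ℝ)/2) • ∫ u in a..b, G u := by
    intro a b ha hb hab
    have hEa := hξeq a ha
    have hEb := hξeq b hb
    have hadd := intervalIntegral.integral_add_adjacent_intervals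
      (hGint 0 a ⟨le_rfl, hT0⟩ ha) (hGint a b ha hb)
    rw [hEa, hEb, ← hadd, smul_add]
    abel
  -- step 1 : increments of ξ
  have step1 : ∀ s u, 0 ≤ s → s ≤ u → u ≤ t₂ → u - s ≤ Δ →
      ‖ξ u - ξ s‖ ≤ H*Δ^α + θ*ε := by
    intro s u hs hsu hut₂ hus
    have hsT : s ∈ Icc 0 T := ⟨hs, le_trans (le_trans hsu hut₂) ht₂T⟩
    have huT : u ∈ Icc 0 T := ⟨le_trans hs hsu, le_trans hut₂ ht₂T⟩
    rw [hdiff s u hsT huT hsu]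
    have hInorm : ‖∫ v in s..u, G v‖ ≤ 2*ε * (u - s) := by
      have h := intervalIntegral.norm_integral_le_of_norm_le_const
        (C := 2*ε) (f := G) (a := s) (b := u) ?_
      · rwa [abs_of_nonneg (by linarith)] at h
      · intro v hv
        rw [Set.uIoc_of_le hsu] at hv
        exact hGbound v ⟨le_trans hs hv.1.le, le_trans hv.2 hut₂⟩
    have hw1 : ‖w u - w s‖ ≤ H * Δ^α := by
      calc ‖w u - w s‖ ≤ H * (u - s)^α := hHle s u hs hsu huT.2
      _ ≤ H * Δ^α := by
          apply mul_le_mul_of_nonneg_left ?_ hHpos.le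
          exact Real.rpow_le_rpow (by linarith) hus hα.le
    calc ‖(w u - w s) - ((m':ℝ)/2) • ∫ v in s..u, G v‖
        ≤ ‖w u - w s‖ + ‖((m':ℝ)/2) • ∫ v in s..u, G v‖ := norm_sub_le _ _
    _ ≤ H*Δ^α + ((m':ℝ)/2) * (2*ε*(u-s)) := by
        apply add_le_add hw1
        rw [norm_smul, Real.norm_eq_abs, abs_of_nonneg (by positivity : (0:ℝ) ≤ (m':ℝ)/2)]
        exact mul_le_mul_of_nonneg_left hInorm (by positivity)
    _ ≤ H*Δ^α + θ*ε := by
        have h1 : ((m':ℝ)/2) * (2*ε*(u-s)) = (m':ℝ)*(u-s)*ε := by ring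
        have h2 : (m':ℝ)*(u-s) ≤ θ := by
          rw [← hm'Δ]
          exact mul_le_mul_of_nonneg_left hus hm'0.le
        rw [h1]
        have : (m':ℝ)*(u-s)*ε ≤ θ*ε := mul_le_mul_of_nonneg_right h2 hεpos.le
        linarith
  -- step 2 : master estimate
  have step2 : ∀ s t', 0 ≤ s → s ≤ t' → t' ≤ t₂ → t' - s ≤ Δ →
      f t' ≤ (1 - (m':ℝ)*(t'-s)) * f s + B := by
    intro s t' hs hst htt₂ hΔ'
    have hsmem : s ∈ Icc 0 t₂ := ⟨hs, le_trans hst htt₂⟩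
    have hsT : s ∈ Icc 0 T := ⟨hs, le_trans hsmem.2 ht₂T⟩
    have ht'T : t' ∈ Icc 0 T := ⟨le_trans hs hst, le_trans htt₂ ht₂T⟩
    obtain ⟨p, hp, hdp, hg⟩ := hproj s hsmem
    obtain ⟨E, hEdef⟩ : ∃ E : Euc d, E = ∫ v in s..t', (G v - G s) := ⟨_, rfl⟩
    have hKnn : (0:ℝ) ≤ H*Δ^α + θ*ε := add_nonneg (mul_nonneg hHpos.le hΔαnn) (mul_nonneg hθpos.le hεpos.le)
    have hEineq : ‖E‖ ≤ 2*L*(H*Δ^α + θ*ε) * (t' - s) := by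
      rw [hEdef]
      have h := intervalIntegral.norm_integral_le_of_norm_le_const
        (C := 2*L*(H*Δ^α + θ*ε)) (f := fun v => G v - G s) (a := s) (b := t') ?_
      · rwa [abs_of_nonneg (by linarith)] at h
      · intro v hv
        rw [Set.uIoc_of_le hst] at hv
        have h1 : dist (G v) (G s) ≤ 2*L * dist (ξ v) (ξ s) := by
          have h2 := hU.2.2.2.2.dist_le_mul (ξ v) (ξ s)
          rwa [Real.coe_toNNReal _ (by linarith : (0:ℝ) ≤ 2*L)] at h2
        have h3 : ‖ξ v - ξ s‖ ≤ H*Δ^α + θ*ε :=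
          step1 s v hs hv.1.le (le_trans hv.2 htt₂) (by linarith [hv.2])
        rw [← dist_eq_norm] at h3 ⊢
        calc dist (G v) (G s) ≤ 2*L * dist (ξ v) (ξ s) := h1
          _ ≤ 2*L*(H*Δ^α + θ*ε) := mul_le_mul_of_nonneg_left h3 (by linarith)
    have hIeq : (∫ v in s..t', G v) = E + (t' - s) • G s := by
      have h7 : (∫ v in s..t', (G v - G s)) =
          (∫ v in s..t', G v) - ∫ v in s..t', G s :=
        intervalIntegral.integral_sub (hGint s t' hsT ht'T) intervalIntegrable_const
      rw [intervalIntegral.integral_const] at h7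
      rw [hEdef, h7]
      abel
    have hcoef : 0 ≤ 1 - (m':ℝ)*(t'-s) := by
      have h2 : (m':ℝ)*(t'-s) ≤ θ := by
        rw [← hm'Δ]; exact mul_le_mul_of_nonneg_left hΔ' hm'0.le
      linarith
    have hgs : G s = (2:ℝ) • (ξ s - p) := hg
    have hdecomp : ξ t' - p = (1 - (m':ℝ)*(t'-s)) • (ξ s - p) +
        ((w t' - w s) - ((m':ℝ)/2) • E) := by
      have h1 := hdiff s t' hsT ht'T hst
      have h2 : ξ t' = ξ s + ((w t' - w s) - ((m':ℝ)/2) • ∫ v in s..t', G v) := by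
        rw [← h1]; abel
      rw [h2, hIeq, hgs]
      module
    have hft' : f t' ≤ ‖ξ t' - p‖ := by
      rw [← dist_eq_norm]
      exact Metric.infDist_le_dist_of_mem hp
    have hnorm1 : ‖(1 - (m':ℝ)*(t'-s)) • (ξ s - p)‖ = (1 - (m':ℝ)*(t'-s)) * f s := by
      rw [norm_smul, Real.norm_eq_abs, abs_of_nonneg hcoef, ← dist_eq_norm, hdp]
    have hw1 : ‖w t' - w s‖ ≤ H * Δ^α := by
      calc ‖w t' - w s‖ ≤ H * (t' - s)^α := hHle s t' hs hst ht'T.2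
        _ ≤ H * Δ^α := mul_le_mul_of_nonneg_left
            (Real.rpow_le_rpow (by linarith) hΔ' hα.le) hHpos.le
    have hE2 : ((m':ℝ)/2) * ‖E‖ ≤ L*θ*(H*Δ^α + θ*ε) := by
      have h1 : ((m':ℝ)/2) * ‖E‖ ≤ ((m':ℝ)/2) * (2*L*(H*Δ^α + θ*ε) * (t'-s)) :=
        mul_le_mul_of_nonneg_left hEineq (by positivity)
      have h2 : ((m':ℝ)/2) * (2*L*(H*Δ^α + θ*ε) * (t'-s)) = L*(H*Δ^α + θ*ε)*((m':ℝ)*(t'-s)) := by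
        ring
      have h3 : (m':ℝ)*(t'-s) ≤ θ := by
        rw [← hm'Δ]; exact mul_le_mul_of_nonneg_left hΔ' hm'0.le
      have h4 : L*(H*Δ^α + θ*ε)*((m':ℝ)*(t'-s)) ≤ L*(H*Δ^α + θ*ε)*θ :=
        mul_le_mul_of_nonneg_left h3 (mul_nonneg hL.le hKnn)
      calc ((m':ℝ)/2) * ‖E‖ ≤ L*(H*Δ^α + θ*ε)*((m':ℝ)*(t'-s)) := by rw [← h2]; exact h1
        _ ≤ L*(H*Δ^α + θ*ε)*θ := h4
        _ = L*θ*(H*Δ^α + θ*ε) := by ring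
    calc f t' ≤ ‖ξ t' - p‖ := hft'
      _ = ‖(1 - (m':ℝ)*(t'-s)) • (ξ s - p) + ((w t' - w s) - ((m':ℝ)/2) • E)‖ := by
          rw [hdecomp]
      _ ≤ ‖(1 - (m':ℝ)*(t'-s)) • (ξ s - p)‖ + ‖(w t' - w s) - ((m':ℝ)/2) • E‖ :=
          norm_add_le _ _
      _ ≤ (1 - (m':ℝ)*(t'-s)) * f s + (‖w t' - w s‖ + ‖((m':ℝ)/2) • E‖) := by
          rw [hnorm1]; exact add_le_add le_rfl (norm_sub_le _ _)
      _ ≤ (1 - (m':ℝ)*(t'-s)) * f s + B := by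
          have h5 : ‖((m':ℝ)/2) • E‖ = ((m':ℝ)/2) * ‖E‖ := by
            rw [norm_smul, Real.norm_eq_abs, abs_of_nonneg (by positivity : (0:ℝ) ≤ (m':ℝ)/2)]
          rw [h5]
          have h6 : H*Δ^α + L*θ*(H*Δ^α + θ*ε) = B := by rw [hBdef]; ring
          linarith [hw1, hE2]
  -- grid induction
  have hgrid : ∀ k : ℕ, (k:ℝ)*Δ ≤ t₂ → f ((k:ℝ)*Δ) ≤ B/θ := by
    intro k
    induction k with
    | zero =>
      intro _
      have h0 : ((0:ℕ):ℝ)*Δ = 0 := by norm_num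
      rw [h0, hf0]
      exact div_nonneg hBnn hθpos.le
    | succ k ih =>
      intro hk1
      have hcast : (((k+1):ℕ):ℝ) = (k:ℝ)+1 := by push_cast; ring
      rw [hcast] at hk1 ⊢
      have hkΔ : (k:ℝ)*Δ ≤ t₂ := by nlinarith [hΔpos, Nat.cast_nonneg (α := ℝ) k]
      have ihk := ih hkΔ
      have hknn : (0:ℝ) ≤ (k:ℝ)*Δ := mul_nonneg (Nat.cast_nonneg _) hΔpos.le
      have hts : ((k:ℝ)+1)*Δ - (k:ℝ)*Δ = Δ := by ring
      have hstep := step2 ((k:ℝ)*Δ) (((k:ℝ)+1)*Δ) hknn (by nlinarith [hΔpos]) hk1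
        (le_of_eq hts)
      rw [hts, hm'Δ] at hstep
      have h1 : (1 - θ) * f ((k:ℝ)*Δ) ≤ (1-θ)*(B/θ) :=
        mul_le_mul_of_nonneg_left ihk (by linarith)
      have h2 : (1-θ)*(B/θ) + B = B/θ := by field_simp; ring
      linarith
  -- conclusion
  have hk₀le : ((Nat.floor (t₂/Δ)):ℝ)*Δ ≤ t₂ := by
    have h1 := Nat.floor_le (div_nonneg ht₂pos.le hΔpos.le)
    calc ((Nat.floor (t₂/Δ)):ℝ)*Δ ≤ (t₂/Δ)*Δ := mul_le_mul_of_nonneg_right h1 hΔpos.le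
      _ = t₂ := by field_simp
  have hk₀ge : t₂ - ((Nat.floor (t₂/Δ)):ℝ)*Δ ≤ Δ := by
    have h1 := Nat.lt_floor_add_one (t₂/Δ)
    have h2 : t₂ < (((Nat.floor (t₂/Δ)):ℝ)+1)*Δ := by
      have := (div_lt_iff₀ hΔpos).mp h1
      linarith [this]
    nlinarith [hΔpos]
  have hfk := hgrid (Nat.floor (t₂/Δ)) hk₀le
  have hstep := step2 (((Nat.floor (t₂/Δ)):ℝ)*Δ) t₂ (mul_nonneg (Nat.cast_nonneg _) hΔpos.le) hk₀le le_rfl hk₀ge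
  have hcoef2 : (1 - (m':ℝ)*(t₂ - ((Nat.floor (t₂/Δ)):ℝ)*Δ)) * f (((Nat.floor (t₂/Δ)):ℝ)*Δ)
      ≤ f (((Nat.floor (t₂/Δ)):ℝ)*Δ) := by
    have h1 : 0 ≤ (m':ℝ)*(t₂ - ((Nat.floor (t₂/Δ)):ℝ)*Δ) :=
      mul_nonneg hm'0.le (by linarith)
    nlinarith [hfnn (((Nat.floor (t₂/Δ)):ℝ)*Δ)]
  linarith [hεt₂, hnum, hfk, hstep, hcoef2]

end
end

section
/- Suppose D satisfies Conditions (A) and (B), κ is a projection-Lipschitz constant for D, U is a penalty function for D with constant L, w : [0,T] → ℝ^d is α-Hölder continuous with w₀ = 0, x₀ ∈ D̄, and m ≥ 1 is an integer with 0 < ε_m^α(w) < min(δ/(180 β λ(w)), r₀/2). Then for every n ≥ 1 and all s, t with T_{m,n−1} ≤ s ≤ t ≤ T_{m,n} (whenever these stopping times are defined in [0,T]), the total variation of φ^m over [s,t] satisfies |φ^m|_t − |φ^m|_s ≤ β · (Δ_{s,t}(ξ^m) + Δ_{s,t}(w)). -/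
open Set Metric MeasureTheory Filter

set_option maxHeartbeats 1600000

noncomputable section

section Aux

open InnerProductSpace Topology

variable {d : ℕ}

local notation "⟪" x ", " y "⟫" => @inner ℝ _ _ x y

lemma inner_gradient (U : Euc d → ℝ) (y v : Euc d) :
    ⟪gradient U y, v⟫ = fderiv ℝ U y v := by
  rw [gradient]
  exact InnerProductSpace.toDual_symm_apply

lemma line_hasDerivAt (U : Euc d → ℝ) (hU : ContDiff ℝ 1 U) (x v : Euc d) :
    HasDerivAt (fun s : ℝ => U (x + s • v)) ⟪gradient U x, v⟫ 0 := by
  have hc : HasDerivAt (fun s : ℝ => x + s • v) v 0 := by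
    simpa using ((hasDerivAt_id (0:ℝ)).smul_const v).const_add x
  have hx0 : x + (0:ℝ) • v = x := by simp
  have hf : HasFDerivAt U (fderiv ℝ U x) (x + (0:ℝ) • v) := by
    rw [hx0]; exact (hU.differentiable one_ne_zero x).hasFDerivAt
  have := hf.comp_hasDerivAt (0:ℝ) hc
  rw [inner_gradient]
  exact this

/-- directional upper bound and line-segment lower bound give the gradient formula. -/
lemma gradient_eq_proj
    (D : Set (Euc d)) (hDcl : (closure D).Nonempty) {r₀ L : ℝ} (hr₀ : 0 < r₀)
    (U : Euc d → ℝ) (hU : IsPenalty D r₀ L U)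
    (proj : Euc d → Euc d)
    (hproj : ∀ x : Euc d, Metric.infDist x (closure D) < r₀ →
      proj x ∈ closure D ∧ dist x (proj x) = Metric.infDist x (closure D))
    (x : Euc d) (hx : Metric.infDist x (closure D) < r₀ / 2) :
    gradient U x = (2:ℝ) • (x - proj x) := by
  set E := closure D with hE
  set ρ := Metric.infDist x E with hρ
  have hρ0 : 0 ≤ ρ := Metric.infDist_nonneg
  obtain ⟨hpE, hpd⟩ := hproj x (by nlinarith)
  have hnorm : ‖x - proj x‖ = ρ := by rw [← dist_eq_norm]; exact hpd
  have hUx : U x = ρ ^ 2 := hU.2.2.1 x hx.le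
  set g := gradient U x with hg
  -- upper bound : ‖g‖ ≤ 2 ρ
  have hupper : ‖g‖ ≤ 2 * ρ := by
    have hd : HasDerivAt (fun s : ℝ => U (x + s • g)) ⟪g, g⟫ 0 :=
      line_hasDerivAt U hU.1 x g
    have hslope : Tendsto (slope (fun s : ℝ => U (x + s • g)) 0) (𝓝[>] (0:ℝ))
        (𝓝 ⟪g, g⟫) :=
      (hasDerivAt_iff_tendsto_slope.1 hd).mono_left
        (nhdsWithin_mono _ fun y hy => ne_of_gt hy)
    have hbnd : Tendsto (fun s : ℝ => ‖g‖ * (2 * ρ + s * ‖g‖)) (𝓝[>] (0:ℝ))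
        (𝓝 (‖g‖ * (2 * ρ))) := by
      have : Tendsto (fun s : ℝ => ‖g‖ * (2 * ρ + s * ‖g‖)) (𝓝 (0:ℝ))
          (𝓝 (‖g‖ * (2 * ρ + 0 * ‖g‖))) := by
        apply Continuous.tendsto
        continuity
      simpa using this.mono_left nhdsWithin_le_nhds
    have hev : ∀ᶠ s in 𝓝[>] (0:ℝ),
        slope (fun s : ℝ => U (x + s • g)) 0 s ≤ ‖g‖ * (2 * ρ + s * ‖g‖) := by
      have hδpos : 0 < (r₀ / 2 - ρ) / (‖g‖ + 1) := by
        apply div_pos (by linarith) (by positivity)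
      filter_upwards [Ioo_mem_nhdsGT_of_mem
        (Set.left_mem_Ico.2 hδpos)] with s hs
      obtain ⟨hs0, hsδ⟩ := hs
      have hρs : Metric.infDist (x + s • g) E ≤ ρ + s * ‖g‖ := by
        have := Metric.infDist_le_infDist_add_dist (x := x + s • g) (y := x) (s := E)
        have hdist : dist (x + s • g) x = s * ‖g‖ := by
          simp [dist_eq_norm, norm_smul, abs_of_pos hs0]
        linarith [this, hdist.le, this.trans_eq (by rw [hdist])]
      have hρsr : Metric.infDist (x + s • g) E ≤ r₀ / 2 := by
        have h1 : s * ‖g‖ ≤ s * (‖g‖ + 1) := by nlinarith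
        have h2 : s * (‖g‖ + 1) < r₀ / 2 - ρ := by
          rw [← lt_div_iff₀ (by positivity)]
          exact hsδ
        linarith
      have hUs : U (x + s • g) = Metric.infDist (x + s • g) E ^ 2 :=
        hU.2.2.1 _ hρsr
      have hρs0 : 0 ≤ Metric.infDist (x + s • g) E := Metric.infDist_nonneg
      have hq : U (x + s • g) - U x ≤ s * (‖g‖ * (2 * ρ + s * ‖g‖)) := by
        rw [hUs, hUx]
        nlinarith [sq_nonneg (Metric.infDist (x + s • g) E - ρ)]
      have hsl0 : slope (fun s : ℝ => U (x + s • g)) 0 s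
          = (U (x + s • g) - U x) / s := by
        rw [slope_def_field]
        norm_num
      rw [hsl0, div_le_iff₀ hs0]
      linarith [hq]
    have := le_of_tendsto_of_tendsto hslope hbnd hev
    rw [real_inner_self_eq_norm_sq] at this
    nlinarith [norm_nonneg g]
  -- lower bound : 2 ρ² ≤ ⟪g, x - proj x⟫
  have hlower : 2 * ρ ^ 2 ≤ ⟪g, x - proj x⟫ := by
    set v := proj x - x with hv
    have hvnorm : ‖v‖ = ρ := by
      rw [hv, ← neg_sub x (proj x), norm_neg, hnorm]
    have hd : HasDerivAt (fun s : ℝ => U (x + s • v)) ⟪g, v⟫ 0 :=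
      line_hasDerivAt U hU.1 x v
    have hslope : Tendsto (slope (fun s : ℝ => U (x + s • v)) 0) (𝓝[>] (0:ℝ))
        (𝓝 ⟪g, v⟫) :=
      (hasDerivAt_iff_tendsto_slope.1 hd).mono_left
        (nhdsWithin_mono _ fun y hy => ne_of_gt hy)
    have hbnd : Tendsto (fun s : ℝ => (s - 2) * ρ ^ 2) (𝓝[>] (0:ℝ))
        (𝓝 ((0 - 2) * ρ ^ 2)) := by
      have : Tendsto (fun s : ℝ => (s - 2) * ρ ^ 2) (𝓝 (0:ℝ))
          (𝓝 ((0 - 2) * ρ ^ 2)) := by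
        apply Continuous.tendsto
        continuity
      exact this.mono_left nhdsWithin_le_nhds
    have hev : ∀ᶠ s in 𝓝[>] (0:ℝ),
        slope (fun s : ℝ => U (x + s • v)) 0 s ≤ (s - 2) * ρ ^ 2 := by
      filter_upwards [Ioo_mem_nhdsGT_of_mem
        (Set.left_mem_Ico.2 one_pos)] with s hs
      obtain ⟨hs0, hs1⟩ := hs
      have hρs : Metric.infDist (x + s • v) E ≤ (1 - s) * ρ := by
        have hmem : Metric.infDist (x + s • v) E ≤ dist (x + s • v) (proj x) :=
          Metric.infDist_le_dist_of_mem hpE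
        have : dist (x + s • v) (proj x) = (1 - s) * ρ := by
          rw [dist_eq_norm]
          have : x + s • v - proj x = -((1 - s) • v) := by
            rw [hv]; module
          rw [this, norm_neg, norm_smul, hvnorm, Real.norm_eq_abs,
            abs_of_nonneg (by linarith)]
        linarith [hmem.trans_eq this]
      have hρsr : Metric.infDist (x + s • v) E ≤ r₀ / 2 := by
        have : (1 - s) * ρ ≤ ρ := by nlinarith
        linarith
      have hUs : U (x + s • v) = Metric.infDist (x + s • v) E ^ 2 :=
        hU.2.2.1 _ hρsr
      have hρs0 : 0 ≤ Metric.infDist (x + s • v) E := Metric.infDist_nonneg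
      have hq : U (x + s • v) - U x ≤ s * ((s - 2) * ρ ^ 2) := by
        rw [hUs, hUx]
        nlinarith [pow_le_pow_left₀ hρs0 hρs 2]
      have hsl : slope (fun s : ℝ => U (x + s • v)) 0 s
          = (U (x + s • v) - U x) / s := by
        rw [slope_def_field]
        norm_num
      rw [hsl, div_le_iff₀ hs0]
      linarith [hq]
    have hle := le_of_tendsto_of_tendsto hslope hbnd hev
    have : ⟪g, x - proj x⟫ = -⟪g, v⟫ := by
      rw [hv, ← inner_neg_right]
      congr 1
      module
    rw [this]
    linarith [hle]
  -- combine
  clear_value g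
  have hexp : ‖g - (2:ℝ) • (x - proj x)‖ ^ 2 ≤ 0 := by
    have h1 : ‖g - (2:ℝ) • (x - proj x)‖ ^ 2
        = ‖g‖ ^ 2 - 2 * ⟪g, (2:ℝ) • (x - proj x)⟫ + ‖(2:ℝ) • (x - proj x)‖ ^ 2 :=
      norm_sub_sq_real g _
    have h2 : ⟪g, (2:ℝ) • (x - proj x)⟫ = 2 * ⟪g, x - proj x⟫ :=
      real_inner_smul_right g _ 2
    have h3 : ‖(2:ℝ) • (x - proj x)‖ ^ 2 = 4 * ρ ^ 2 := by
      rw [norm_smul, Real.norm_eq_abs, hnorm]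
      rw [abs_of_nonneg (by norm_num : (0:ℝ) ≤ 2)]
      ring
    rw [h1, h2, h3]
    nlinarith [norm_nonneg g]
  have : ‖g - (2:ℝ) • (x - proj x)‖ = 0 := by
    nlinarith [norm_nonneg (g - (2:ℝ) • (x - proj x)),
      sq_nonneg ‖g - (2:ℝ) • (x - proj x)‖]
  rw [← sub_eq_zero]
  exact norm_eq_zero.mp this

lemma sqrt_add_le_sqrt_add_sqrt {a b : ℝ} (ha : 0 ≤ a) (hb : 0 ≤ b) :
    Real.sqrt (a + b) ≤ Real.sqrt a + Real.sqrt b := by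
  have h1 := Real.sq_sqrt (add_nonneg ha hb)
  have h2 := Real.sq_sqrt ha
  have h3 := Real.sq_sqrt hb
  nlinarith [Real.sqrt_nonneg a, Real.sqrt_nonneg b, Real.sqrt_nonneg (a + b),
    mul_nonneg (Real.sqrt_nonneg a) (Real.sqrt_nonneg b)]

lemma gradient_continuous (U : Euc d → ℝ) (hU : ContDiff ℝ 1 U) :
    Continuous (gradient U) := by
  have h1 : Continuous (fderiv ℝ U) := hU.continuous_fderiv one_ne_zero
  have : Continuous fun y => (InnerProductSpace.toDual ℝ (Euc d)).symm (fderiv ℝ U y) :=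
    (LinearIsometryEquiv.continuous _).comp h1
  exact this

/-- A priori estimate: the penalized solution stays within distance `r₀/4` of `closure D`. -/
lemma apriori
    (D : Set (Euc d)) (hDcl : (closure D).Nonempty)
    {r₀ L T α K : ℝ} (hr₀ : 0 < r₀) (hL : 0 < L) (hT : 0 < T) (hα : 0 < α)
    (U : Euc d → ℝ) (hU : IsPenalty D r₀ L U)
    (w : ℝ → Euc d) (hw0 : w 0 = 0)
    (x₀ : Euc d) (hx₀ : x₀ ∈ closure D)
    (proj : Euc d → Euc d)
    (hproj : ∀ x : Euc d, Metric.infDist x (closure D) < r₀ →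
      proj x ∈ closure D ∧ dist x (proj x) = Metric.infDist x (closure D))
    (m : ℕ) (hm : 1 ≤ m)
    (ξ : ℝ → Euc d) (hξ : IsPenalizedSol U T w x₀ m ξ)
    (hK : 0 ≤ K)
    (hHolK : ∀ x y : ℝ, 0 ≤ x → x ≤ y → y ≤ T → ‖w y - w x‖ ≤ K * (y - x) ^ α)
    (hbound : (L + 1) * (K * (2 / (m:ℝ)) ^ α) ≤ r₀ / 16) :
    ∀ t ∈ Set.Icc (0:ℝ) T, Metric.infDist (ξ t) (closure D) ≤ r₀ / 4 := by
  set E := closure D with hE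
  set f : ℝ → ℝ := fun u => Metric.infDist (ξ u) E with hf
  by_contra hcon
  push_neg at hcon
  obtain ⟨t₀, ht₀, ht₀f⟩ := hcon
  set F : Set ℝ := {u | u ∈ Set.Icc (0:ℝ) T ∧ r₀ / 4 ≤ f u} with hFdef
  have hFne : F.Nonempty := ⟨t₀, ht₀, ht₀f.le⟩
  have hcξ : ContinuousOn ξ (Set.Icc 0 T) := hξ.1
  have hcf : ContinuousOn f (Set.Icc 0 T) :=
    (continuous_infDist_pt E).comp_continuousOn hcξ
  have hFclosed : IsClosed F := by
    have : F = Set.Icc (0:ℝ) T ∩ f ⁻¹' (Set.Ici (r₀/4)) := by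
      ext u
      simp only [hFdef, Set.mem_setOf_eq, Set.mem_inter_iff, Set.mem_preimage, Set.mem_Ici]
    rw [this]
    exact hcf.preimage_isClosed_of_isClosed isClosed_Icc isClosed_Ici
  have hFbdd : BddBelow F := ⟨0, fun u hu => hu.1.1⟩
  set τ := sInf F with hτdef
  have hτF : τ ∈ F := hFclosed.csInf_mem hFne hFbdd
  have hτIcc : τ ∈ Set.Icc (0:ℝ) T := hτF.1
  have hfτ : r₀ / 4 ≤ f τ := hτF.2
  have hmpos : (0:ℝ) < m := by exact_mod_cast Nat.lt_of_lt_of_le Nat.zero_lt_one hm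
  -- ξ 0 = x₀ and f 0 = 0
  have hξ0 : ξ 0 = x₀ := by
    have := hξ.2 0 ⟨le_rfl, hT.le⟩
    simpa [intervalIntegral.integral_same, hw0] using this
  have hf0 : f 0 = 0 := by
    rw [hf]; simp only [hξ0]
    exact Metric.infDist_zero_of_mem hx₀
  have hτpos : 0 < τ := by
    rcases lt_or_eq_of_le hτIcc.1 with h | h
    · exact h
    · exfalso; rw [← h] at hfτ; rw [hf0] at hfτ; linarith
  have hlt : ∀ u, 0 ≤ u → u < τ → f u < r₀ / 4 := by
    intro u hu0 huτ
    by_contra hge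
    push_neg at hge
    have : u ∈ F := ⟨⟨hu0, huτ.le.trans hτIcc.2⟩, hge⟩
    exact absurd (csInf_le hFbdd this) (not_le.2 huτ)
  have hfτle : f τ ≤ r₀ / 4 := by
    have hsub : Set.Ioo (0:ℝ) τ ⊆ Set.Icc 0 T :=
      fun u hu => ⟨hu.1.le, hu.2.le.trans hτIcc.2⟩
    have hnb : (𝓝[Set.Ioo (0:ℝ) τ] τ).NeBot := by
      apply mem_closure_iff_nhdsWithin_neBot.mp
      rw [closure_Ioo hτpos.ne]
      exact ⟨hτpos.le, le_rfl⟩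
    have htd : Tendsto f (𝓝[Set.Ioo (0:ℝ) τ] τ) (𝓝 (f τ)) :=
      (hcf.continuousWithinAt hτIcc).mono hsub
    exact le_of_tendsto htd
      (eventually_nhdsWithin_of_forall fun u hu => (hlt u hu.1.le hu.2).le)
  have hfle : ∀ u ∈ Set.Icc (0:ℝ) τ, f u ≤ r₀ / 4 := by
    intro u hu
    rcases lt_or_eq_of_le hu.2 with h | h
    · exact (hlt u hu.1 h).le
    · rw [h]; exact hfτle
  -- window parameters
  set h' : ℝ := 2 / (m:ℝ) with hh'
  have hh'pos : 0 < h' := by positivity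
  set r : ℝ := max 0 (τ - h') with hrdef
  have hr0 : 0 ≤ r := le_max_left _ _
  have hrτ : r < τ := max_lt hτpos (by linarith)
  have hrT : r ≤ T := hrτ.le.trans hτIcc.2
  have hτr : τ - r ≤ h' := by
    have : τ - h' ≤ r := le_max_right _ _
    linarith
  have hsub : Set.Icc r τ ⊆ Set.Icc (0:ℝ) T :=
    fun u hu => ⟨hr0.trans hu.1, hu.2.trans hτIcc.2⟩
  set b : ℝ := K * h' ^ α with hbdef
  have hb0 : 0 ≤ b := by
    apply mul_nonneg hK
    exact Real.rpow_nonneg hh'pos.le _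
  have hLb : (L + 1) * b ≤ r₀ / 16 := hbound
  have hb16 : b ≤ r₀ / 16 := by nlinarith
  have hwb : ∀ u ∈ Set.Icc r τ, ‖w u - w r‖ ≤ b := by
    intro u hu
    have h1 : ‖w u - w r‖ ≤ K * (u - r) ^ α :=
      hHolK r u hr0 hu.1 (hu.2.trans hτIcc.2)
    have h2 : (u - r) ^ α ≤ h' ^ α :=
      Real.rpow_le_rpow (by linarith [hu.1]) (by linarith [hu.2]) hα.le
    calc ‖w u - w r‖ ≤ K * (u - r) ^ α := h1
      _ ≤ K * h' ^ α := by nlinarith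
  -- continuous clamped versions
  set c : ℝ → ℝ := fun u => max 0 (min u T) with hcdef
  have hccont : Continuous c := continuous_const.max (continuous_id.min continuous_const)
  have hcmem : ∀ u, c u ∈ Set.Icc (0:ℝ) T :=
    fun u => ⟨le_max_left _ _, max_le hT.le (min_le_right _ _)⟩
  have hceq : ∀ u ∈ Set.Icc (0:ℝ) T, c u = u := by
    intro u hu
    rw [hcdef]
    simp only [min_eq_left hu.2, max_eq_right hu.1]
  set gc : ℝ → Euc d := fun u => gradient U (ξ (c u)) with hgcdef
  have hgccont : Continuous gc :=
    (gradient_continuous U hU.1).comp (hcξ.comp_continuous hccont hcmem)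
  set Ic : ℝ → Euc d := fun v => ∫ s in (0:ℝ)..v, gc s with hIcdef
  have hIc : ∀ v, HasDerivAt Ic (gc v) v :=
    fun v => (hgccont.integral_hasStrictDerivAt 0 v).hasDerivAt
  have hIeq : ∀ u ∈ Set.Icc (0:ℝ) T,
      (∫ s in (0:ℝ)..u, gradient U (ξ s)) = Ic u := by
    intro u hu
    apply intervalIntegral.integral_congr
    intro s hs
    rw [Set.uIcc_of_le hu.1] at hs
    have hsIcc : s ∈ Set.Icc (0:ℝ) T := ⟨hs.1, hs.2.trans hu.2⟩
    simp only [hgcdef, hceq s hsIcc]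
  have hξeq : ∀ u ∈ Set.Icc (0:ℝ) T, ξ u = x₀ + w u - ((m:ℝ)/2) • Ic u := by
    intro u hu
    rw [← hIeq u hu]
    exact hξ.2 u hu
  -- the shifted path and its energy
  set Pc : ℝ → Euc d := fun u => x₀ + w r - ((m:ℝ)/2) • Ic u with hPcdef
  have hPc : ∀ u, HasDerivAt Pc (-(((m:ℝ)/2) • gc u)) u := by
    intro u
    exact ((hIc u).const_smul ((m:ℝ)/2)).const_sub (x₀ + w r)
  have hPcP : ∀ u ∈ Set.Icc (0:ℝ) T, Pc u = ξ u - w u + w r := by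
    intro u hu
    rw [hPcdef]
    simp only
    rw [hξeq u hu]
    abel
  set G : ℝ → ℝ := fun u => U (Pc u) with hGdef
  have hG : ∀ u, HasDerivAt G ⟪gradient U (Pc u), -(((m:ℝ)/2) • gc u)⟫ u := by
    intro u
    have hfd : HasFDerivAt U (fderiv ℝ U (Pc u)) (Pc u) :=
      (hU.1.differentiable one_ne_zero (Pc u)).hasFDerivAt
    have := hfd.comp_hasDerivAt u (hPc u)
    rw [inner_gradient]
    exact this
  -- region facts on the window
  have hregion : ∀ u ∈ Set.Icc r τ, Metric.infDist (Pc u) E ≤ r₀/4 + b := by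
    intro u hu
    have huT := hsub hu
    have hfu : f u ≤ r₀ / 4 := hfle u ⟨(hsub hu).1, hu.2⟩
    have hPP := hPcP u huT
    have hdPu : dist (Pc u) (ξ u) = ‖w r - w u‖ := by
      rw [hPP, dist_eq_norm]
      congr 1
      abel
    have h1 : Metric.infDist (Pc u) E ≤ Metric.infDist (ξ u) E + dist (Pc u) (ξ u) :=
      Metric.infDist_le_infDist_add_dist
    have h2 : ‖w r - w u‖ ≤ b := by rw [norm_sub_rev]; exact hwb u hu
    rw [hdPu] at h1
    have : Metric.infDist (ξ u) E = f u := rfl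
    linarith
  have hregion2 : ∀ u ∈ Set.Icc r τ, Metric.infDist (Pc u) E < r₀ / 2 := by
    intro u hu
    have := hregion u hu
    linarith
  have hGeq : ∀ u ∈ Set.Icc r τ, G u = Metric.infDist (Pc u) E ^ 2 :=
    fun u hu => hU.2.2.1 _ (hregion2 u hu).le
  set cc : ℝ := (L * b) ^ 2 with hccdef
  have hcc0 : 0 ≤ cc := sq_nonneg _
  -- derivative bound
  have hdG : ∀ u ∈ Set.Icc r τ,
      ⟪gradient U (Pc u), -(((m:ℝ)/2) • gc u)⟫ ≤ -(m:ℝ) * G u + (m:ℝ) * cc := by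
    intro u hu
    have huT := hsub hu
    set A := gradient U (Pc u) with hA
    set B := gc u with hB
    have hBval : B = gradient U (ξ u) := by
      simp only [hB, hgcdef, hceq u huT]
    set ρP := Metric.infDist (Pc u) E with hρP
    have hρP0 : 0 ≤ ρP := Metric.infDist_nonneg
    have hgradP : A = (2:ℝ) • (Pc u - proj (Pc u)) :=
      gradient_eq_proj D hDcl hr₀ U hU proj hproj (Pc u) (hregion2 u hu)
    have hAnorm : ‖A‖ = 2 * ρP := by
      rw [hgradP, norm_smul, Real.norm_eq_abs, abs_of_nonneg (by norm_num : (0:ℝ) ≤ 2),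
        ← dist_eq_norm, (hproj (Pc u) (by linarith [hregion2 u hu])).2]
    have hABdist : ‖B - A‖ ≤ 2 * L * b := by
      have hlip := hU.2.2.2.2.dist_le_mul (ξ u) (Pc u)
      have hco : ((Real.toNNReal (2*L)) : ℝ) = 2 * L :=
        Real.coe_toNNReal _ (by positivity)
      rw [hco] at hlip
      have hdP : dist (ξ u) (Pc u) = ‖w u - w r‖ := by
        rw [hPcP u huT, dist_eq_norm]
        congr 1
        abel
      rw [hdP] at hlip
      have h2 : ‖w u - w r‖ ≤ b := hwb u hu
      calc ‖B - A‖ = dist (gradient U (ξ u)) (gradient U (Pc u)) := by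
            rw [hBval, hA, dist_eq_norm]
        _ ≤ 2 * L * ‖w u - w r‖ := hlip
        _ ≤ 2 * L * b := by nlinarith
    have hAB : ⟪A, B⟫ ≥ ‖A‖^2 - ‖A‖ * (2 * L * b) := by
      have h1 : ⟪A, B⟫ = ⟪A, A⟫ + ⟪A, B - A⟫ := by
        rw [← inner_add_right]
        congr 1
        abel
      have h2 : |⟪A, B - A⟫| ≤ ‖A‖ * ‖B - A‖ := abs_real_inner_le_norm _ _
      have h3 : ⟪A, A⟫ = ‖A‖^2 := real_inner_self_eq_norm_sq A
      have h4 : ‖A‖ * ‖B - A‖ ≤ ‖A‖ * (2 * L * b) := by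
        apply mul_le_mul_of_nonneg_left hABdist (norm_nonneg _)
      have h5 : -(‖A‖ * ‖B - A‖) ≤ ⟪A, B - A⟫ := neg_le_of_abs_le h2
      linarith
    have hABlow : ⟪A, B⟫ ≥ 2 * G u - 2 * cc := by
      have hGu : G u = ρP ^ 2 := hGeq u hu
      rw [hGu, hccdef]
      nlinarith [sq_nonneg (ρP - L * b), hAnorm, hAB]
    have hval : ⟪A, -(((m:ℝ)/2) • B)⟫ = -((m:ℝ)/2) * ⟪A, B⟫ := by
      rw [inner_neg_right, real_inner_smul_right]
      ring
    rw [hval]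
    nlinarith [hABlow]
  -- Gronwall
  set W : ℝ → ℝ := fun u => Real.exp ((m:ℝ)*(u - r)) * (G u - cc) with hWdef
  have hW : ∀ u, HasDerivAt W
      (Real.exp ((m:ℝ)*(u - r)) * (m:ℝ) * (G u - cc)
        + Real.exp ((m:ℝ)*(u - r)) * ⟪gradient U (Pc u), -(((m:ℝ)/2) • gc u)⟫) u := by
    intro u
    have hlin : HasDerivAt (fun u : ℝ => (m:ℝ)*(u - r)) (m:ℝ) u := by
      simpa using ((hasDerivAt_id u).sub_const r).const_mul (m:ℝ)
    have hexp : HasDerivAt (fun u : ℝ => Real.exp ((m:ℝ)*(u - r)))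
        (Real.exp ((m:ℝ)*(u - r)) * (m:ℝ)) u := hlin.exp
    have hGc : HasDerivAt (fun u => G u - cc)
        ⟪gradient U (Pc u), -(((m:ℝ)/2) • gc u)⟫ u := (hG u).sub_const cc
    have := hexp.mul hGc
    exact this
  have hWanti : AntitoneOn W (Set.Icc r τ) := by
    apply antitoneOn_of_deriv_nonpos (convex_Icc r τ)
    · exact (Differentiable.continuous fun u => (hW u).differentiableAt).continuousOn
    · intro x hx
      exact (hW x).differentiableAt.differentiableWithinAt
    · intro x hx
      rw [interior_Icc] at hx
      rw [(hW x).deriv]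
      have hx' : x ∈ Set.Icc r τ := Set.Ioo_subset_Icc_self hx
      have h1 := hdG x hx'
      have h2 : (0:ℝ) < Real.exp ((m:ℝ)*(x - r)) := Real.exp_pos _
      nlinarith [mul_le_mul_of_nonneg_left h1 h2.le]
  have hWτ : W τ ≤ W r :=
    hWanti ⟨le_rfl, hrτ.le⟩ ⟨hrτ.le, le_rfl⟩ hrτ.le
  set X : ℝ := Real.exp ((m:ℝ)*(τ - r)) with hXdef
  have hXpos : 0 < X := Real.exp_pos _
  have hWτ' : X * (G τ - cc) ≤ G r - cc := by
    have h0 : W r = G r - cc := by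
      simp [hWdef]
    have h1 : W τ = X * (G τ - cc) := rfl
    calc X * (G τ - cc) = W τ := h1.symm
      _ ≤ W r := hWτ
      _ = G r - cc := h0
  -- endpoint values
  have hrIcc : r ∈ Set.Icc (0:ℝ) T := ⟨hr0, hrT⟩
  have hPcr : Pc r = ξ r := by
    rw [hPcP r hrIcc]
    abel
  have hGr : G r = f r ^ 2 := by
    have := hGeq r ⟨le_rfl, hrτ.le⟩
    rw [hPcr] at this
    exact this
  have hfr0 : 0 ≤ f r := Metric.infDist_nonneg
  have hfr : f r ≤ r₀ / 4 := hfle r ⟨hr0, hrτ.le⟩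
  have hGr0 : 0 ≤ G r := by rw [hGr]; positivity
  have hGτ : G τ ≤ G r / X + cc := by
    have h1 : G τ - cc ≤ (G r - cc) / X := by
      rw [le_div_iff₀ hXpos]
      linarith [hWτ']
    have h2 : (G r - cc) / X ≤ G r / X :=
      (div_le_div_iff_of_pos_right hXpos).mpr (by linarith)
    linarith
  -- final contradiction
  have hτIcc' : τ ∈ Set.Icc r τ := ⟨hrτ.le, le_rfl⟩
  set ρPτ : ℝ := Metric.infDist (Pc τ) E with hρPτdef
  have hρPτ0 : 0 ≤ ρPτ := Metric.infDist_nonneg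
  have hGτeq : G τ = ρPτ ^ 2 := hGeq τ hτIcc'
  have hGrX0 : 0 ≤ G r / X := div_nonneg hGr0 hXpos.le
  have hsqrtcc : Real.sqrt cc = L * b := by
    rw [hccdef, Real.sqrt_sq (by positivity)]
  have hρPτsq : ρPτ = Real.sqrt (G τ) := by
    rw [hGτeq, Real.sqrt_sq hρPτ0]
  have hsplit : Real.sqrt (G r / X + cc) ≤ Real.sqrt (G r / X) + Real.sqrt cc :=
    sqrt_add_le_sqrt_add_sqrt hGrX0 hcc0
  have hXsqrtpos : 0 < Real.sqrt X := Real.sqrt_pos.mpr hXpos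
  have hsqrtdiv : Real.sqrt (G r / X) = f r / Real.sqrt X := by
    rw [Real.sqrt_div hGr0, hGr, Real.sqrt_sq hfr0]
  have hρPτb : ρPτ ≤ f r / Real.sqrt X + L * b := by
    calc ρPτ = Real.sqrt (G τ) := hρPτsq
      _ ≤ Real.sqrt (G r / X + cc) := Real.sqrt_le_sqrt hGτ
      _ ≤ Real.sqrt (G r / X) + Real.sqrt cc := hsplit
      _ = f r / Real.sqrt X + L * b := by rw [hsqrtdiv, hsqrtcc]
  have hfτb : f τ ≤ ρPτ + b := by
    have h1 : Metric.infDist (ξ τ) E ≤ Metric.infDist (Pc τ) E + dist (ξ τ) (Pc τ) :=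
      Metric.infDist_le_infDist_add_dist
    have h2 : dist (ξ τ) (Pc τ) = ‖w τ - w r‖ := by
      rw [hPcP τ (hsub hτIcc'), dist_eq_norm]
      congr 1
      abel
    have h3 : ‖w τ - w r‖ ≤ b := hwb τ hτIcc'
    have : f τ = Metric.infDist (ξ τ) E := rfl
    rw [this]
    rw [h2] at h1
    linarith
  have hfinal : f r / Real.sqrt X ≤ r₀ / 8 := by
    rcases le_or_gt h' τ with hcase | hcase
    · -- r = τ - h', X = exp 2
      have hreq : r = τ - h' := max_eq_right (by linarith)
      have hXeq : X = Real.exp 2 := by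
        rw [hXdef, hreq]
        congr 1
        have : τ - (τ - h') = h' := by ring
        rw [this, hh']
        field_simp
      have hsX : Real.sqrt X = Real.exp 1 := by
        rw [hXeq, ← Real.exp_half]
        norm_num
      have hexp2 : (2:ℝ) ≤ Real.sqrt X := by
        rw [hsX]
        linarith [Real.add_one_le_exp 1]
      calc f r / Real.sqrt X ≤ (r₀/4) / 2 :=
            div_le_div₀ (by positivity) hfr (by norm_num) hexp2
        _ = r₀ / 8 := by ring
    · -- r = 0
      have hreq : r = 0 := max_eq_left (by linarith)
      have : f r = 0 := by rw [hreq]; exact hf0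
      rw [this, zero_div]
      positivity
  linarith [hfτ, hfτb, hρPτb, hfinal, hLb, hb16, hr₀]

lemma eVariationOn_le_of_increments (φ : ℝ → Euc d) (ψ : ℝ → ℝ) {s t : ℝ} (hst : s ≤ t)
    (h : ∀ x y : ℝ, x ∈ Set.Icc s t → y ∈ Set.Icc s t → x ≤ y → ‖φ y - φ x‖ ≤ ψ y - ψ x) :
    eVariationOn φ (Set.Icc s t) ≤ ENNReal.ofReal (ψ t - ψ s) := by
  apply iSup_le
  rintro ⟨N, u, hu, hus⟩
  have hkey : ∀ i j : ℕ, i ≤ j → ‖φ (u j) - φ (u i)‖ ≤ ψ (u j) - ψ (u i) :=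
    fun i j hij => h (u i) (u j) (hus i) (hus j) (hu hij)
  calc ∑ i ∈ Finset.range N, edist (φ (u (i+1))) (φ (u i))
      ≤ ∑ i ∈ Finset.range N, ENNReal.ofReal (ψ (u (i+1)) - ψ (u i)) := by
        apply Finset.sum_le_sum
        intro i _
        rw [edist_dist, dist_eq_norm]
        exact ENNReal.ofReal_le_ofReal (hkey i (i+1) (Nat.le_succ i))
    _ = ENNReal.ofReal (∑ i ∈ Finset.range N, (ψ (u (i+1)) - ψ (u i))) := by
        rw [ENNReal.ofReal_sum_of_nonneg]
        intro i _
        have := hkey i (i+1) (Nat.le_succ i)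
        linarith [norm_nonneg (φ (u (i+1)) - φ (u i))]
    _ = ENNReal.ofReal (ψ (u N) - ψ (u 0)) := by rw [Finset.sum_range_sub (fun i => ψ (u i))]
    _ ≤ ENNReal.ofReal (ψ t - ψ s) := by
        apply ENNReal.ofReal_le_ofReal
        have h1 : ψ (u N) ≤ ψ t := by
          have := h (u N) t (hus N) ⟨hst, le_rfl⟩ (hus N).2
          linarith [norm_nonneg (φ t - φ (u N))]
        have h2 : ψ s ≤ ψ (u 0) := by
          have := h s (u 0) ⟨le_rfl, hst⟩ (hus 0) (hus 0).1
          linarith [norm_nonneg (φ (u 0) - φ s)]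
        linarith

end Aux

/-- between consecutive stopping times, the variation of `φ^m` on `[s,t]`
is bounded by `β (Δ_{s,t}(ξ^m) + Δ_{s,t}(w))`. -/
theorem penalization_variation_osc_bound
    (d : ℕ) (hd : 1 ≤ d) (D : Set (Euc d)) (hDne : D.Nonempty) (hDopen : IsOpen D)
    (r₀ δ β : ℝ) (hA : CondA D r₀) (hB : CondB D δ β)
    (L T α : ℝ) (hL : 0 < L) (hT : 0 < T) (hα : 0 < α) (hα2 : α < 1 / 2)
    (U : Euc d → ℝ) (hU : IsPenalty D r₀ L U)
    (w : ℝ → Euc d) (hw0 : w 0 = 0) (hHol : ∃ C : ℝ, IsHolder w T α C)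
    (x₀ : Euc d) (hx₀ : x₀ ∈ closure D)
    (proj : Euc d → Euc d)
    (hproj : ∀ x : Euc d, Metric.infDist x (closure D) < r₀ →
      proj x ∈ closure D ∧ dist x (proj x) = Metric.infDist x (closure D))
    (κ : ℝ) (hκ : 0 < κ)
    (hκlip : ∀ x y : Euc d, Metric.infDist x (closure D) < r₀ / 2 →
      Metric.infDist y (closure D) < r₀ / 2 → dist (proj x) (proj y) ≤ κ * dist x y)
    (γ lamw : ℝ) (hγ : γ = 2 * κ ^ 2 * β / r₀)
    (hlam : lamw = Real.exp (γ * (supNorm w T + δ)))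
    (m : ℕ) (hm : 1 ≤ m)
    (hε1 : 0 < epsm w T α L m)
    (hε2 : epsm w T α L m < min (δ / (180 * β * lamw)) (r₀ / 2))
    (ξ : ℝ → Euc d) (hξ : IsPenalizedSol U T w x₀ m ξ)
    (φm : ℝ → Euc d)
    (hφm : ∀ t : ℝ, φm t = -(((m : ℝ) / 2) • ∫ s in (0 : ℝ)..t, gradient U (ξ s)))
    (n : ℕ) (hn : 1 ≤ n) (Tm tm : ℕ → ℝ)
    (hT0ne : {t | t ∈ Set.Icc 0 T ∧ proj (ξ t) ∈ frontier D}.Nonempty)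
    (hT0 : Tm 0 = sInf {t | t ∈ Set.Icc 0 T ∧ proj (ξ t) ∈ frontier D})
    (htm : ∀ k : ℕ, 1 ≤ k → k ≤ n →
      {t | t ∈ Set.Ioc (Tm (k - 1)) T ∧
        δ / 2 ≤ ‖proj (ξ t) - proj (ξ (Tm (k - 1)))‖}.Nonempty ∧
      tm k = sInf {t | t ∈ Set.Ioc (Tm (k - 1)) T ∧
        δ / 2 ≤ ‖proj (ξ t) - proj (ξ (Tm (k - 1)))‖})
    (hTm : ∀ k : ℕ, 1 ≤ k → k ≤ n →
      {t | t ∈ Set.Icc (tm k) T ∧ proj (ξ t) ∈ frontier D}.Nonempty ∧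
      Tm k = sInf {t | t ∈ Set.Icc (tm k) T ∧ proj (ξ t) ∈ frontier D}) :
    ∀ s t : ℝ, Tm (n - 1) ≤ s → s ≤ t → t ≤ Tm n →
      variationOnFromTo φm (Set.Icc 0 T) s t ≤ β * (osc ξ s t + osc w s t) := by
  have hr₀ : 0 < r₀ := hA.1
  have hδ : 0 < δ := hB.1
  have hβ1 : 1 ≤ β := hB.2.1
  have hβ0 : 0 < β := lt_of_lt_of_le one_pos hβ1
  have hE : (closure D).Nonempty := hDne.closure
  have hmpos : (0:ℝ) < m := by exact_mod_cast Nat.lt_of_lt_of_le Nat.zero_lt_one hm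
  have hmα : (0:ℝ) < (m:ℝ) ^ α := Real.rpow_pos_of_pos hmpos α
  set K := holderSemi w T α with hKdef
  -- positivity of the Hölder seminorm
  have hεval : epsm w T α L m = 12 * Real.exp L / (m:ℝ) ^ α * K := rfl
  have hK : 0 < K := by
    by_contra hKn
    push_neg at hKn
    have h1 : 0 < 12 * Real.exp L / (m:ℝ) ^ α := by positivity
    have := mul_nonpos_of_nonneg_of_nonpos h1.le hKn
    rw [hεval] at hε1
    linarith
  -- Hölder bound with constant K
  obtain ⟨C, hC⟩ := hHol
  have hHolK : ∀ x y : ℝ, 0 ≤ x → x ≤ y → y ≤ T → ‖w y - w x‖ ≤ K * (y - x) ^ α := by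
    intro x y hx hxy hyT
    rcases eq_or_lt_of_le hxy with h | h
    · rw [← h]
      simp [Real.zero_rpow (ne_of_gt hα)]
    · have hpow : (0:ℝ) < (y - x) ^ α := Real.rpow_pos_of_pos (by linarith) α
      have hub : ∀ c ∈ {c : ℝ | ∃ s t : ℝ, 0 ≤ s ∧ s < t ∧ t ≤ T ∧
          c = ‖w t - w s‖ / (t - s) ^ α}, c ≤ C := by
        rintro c ⟨u, v, hu, huv, hvT, rfl⟩
        have hp : (0:ℝ) < (v - u) ^ α := Real.rpow_pos_of_pos (by linarith) α
        rw [div_le_iff₀ hp]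
        exact hC u v hu huv.le hvT
      have hmem : ‖w y - w x‖ / (y - x) ^ α ∈ {c : ℝ | ∃ s t : ℝ, 0 ≤ s ∧ s < t ∧ t ≤ T ∧
          c = ‖w t - w s‖ / (t - s) ^ α} := ⟨x, y, hx, h, hyT, rfl⟩
      have := le_csSup ⟨C, hub⟩ hmem
      rw [hKdef, holderSemi]
      rw [div_le_iff₀ hpow] at this
      linarith [this]
  -- the bound needed for the a priori estimate
  have hε2' : epsm w T α L m < r₀ / 2 := lt_of_lt_of_le hε2 (min_le_right _ _)
  have hε2δ : epsm w T α L m < δ / (180 * β * lamw) := lt_of_lt_of_le hε2 (min_le_left _ _)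
  have hbound : (L + 1) * (K * (2 / (m:ℝ)) ^ α) ≤ r₀ / 16 := by
    have h2α : ((2:ℝ)/m) ^ α = (2:ℝ)^α / (m:ℝ)^α := Real.div_rpow (by norm_num) hmpos.le α
    have h2αb : (2:ℝ)^α ≤ 3/2 := by
      have h1 : (2:ℝ)^α ≤ (2:ℝ)^((1:ℝ)/2) :=
        Real.rpow_le_rpow_of_exponent_le (by norm_num) (by linarith)
      have h2 : (2:ℝ)^((1:ℝ)/2) = Real.sqrt 2 := by
        rw [Real.sqrt_eq_rpow]
      have h3 : Real.sqrt 2 ≤ 3/2 := by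
        nlinarith [Real.sq_sqrt (by norm_num : (0:ℝ) ≤ 2), Real.sqrt_nonneg 2]
      linarith
    set q := K / (m:ℝ)^α with hq
    have hq0 : 0 < q := div_pos hK hmα
    have hεq : epsm w T α L m = 12 * Real.exp L * q := by
      rw [hεval, hq]; ring
    have hgoal : K * (2/(m:ℝ))^α = (2:ℝ)^α * q := by
      rw [h2α, hq]; ring
    rw [hgoal]
    have hLe : L + 1 ≤ Real.exp L := by
      have := Real.add_one_le_exp L
      linarith
    have h2q : (2:ℝ)^α * q ≤ (3/2) * q := by nlinarith
    have hfin : (L+1) * ((2:ℝ)^α * q) ≤ Real.exp L * ((3/2) * q) := by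
      apply mul_le_mul hLe h2q (by positivity) (Real.exp_pos L).le
    have hlast : Real.exp L * ((3/2) * q) ≤ r₀/16 := by
      rw [hεq] at hε2'
      nlinarith
    linarith
  -- a priori estimate
  have hdist : ∀ u ∈ Set.Icc (0:ℝ) T, Metric.infDist (ξ u) (closure D) ≤ r₀ / 4 :=
    apriori D hE hr₀ hL hT hα U hU w hw0 x₀ hx₀ proj hproj m hm ξ hξ hK.le hHolK hbound
  -- nonnegativity of oscillations
  have hoscnn : ∀ (fu : ℝ → Euc d) (a b : ℝ), 0 ≤ osc fu a b := by
    intro fu a b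
    apply Real.sSup_nonneg
    rintro c ⟨u', v', _, _, _, rfl⟩
    exact norm_nonneg _
  intro s t hs1 hst ht2
  rcases eq_or_lt_of_le hst with heq | hlt
  · rw [← heq, variationOnFromTo.self]
    have := hoscnn ξ s s
    have := hoscnn w s s
    positivity
  -- main case : s < t
  -- bounds on stopping times
  have hTmk : ∀ k : ℕ, k ≤ n → 0 ≤ Tm k := by
    intro k
    induction k with
    | zero =>
      intro _
      rw [hT0]
      exact le_csInf hT0ne (fun x hx => hx.1.1)
    | succ p ih =>
      intro hpn
      obtain ⟨hAne, htmeq⟩ := htm (p+1) (by omega) hpn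
      obtain ⟨hBne', hTmeq'⟩ := hTm (p+1) (by omega) hpn
      have hp : p + 1 - 1 = p := by omega
      rw [hp] at hAne htmeq
      have h1 : 0 ≤ tm (p+1) := by
        rw [htmeq]
        apply le_csInf hAne
        rintro x ⟨hx1, _⟩
        exact (ih (by omega)).trans hx1.1.le
      rw [hTmeq']
      apply le_csInf hBne'
      rintro x ⟨hx1, _⟩
      exact h1.trans hx1.1
  have h0s : 0 ≤ s := (hTmk (n-1) (by omega)).trans hs1
  obtain ⟨hBne, hTmeq⟩ := hTm n hn le_rfl
  have hTmnT : Tm n ≤ T := by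
    obtain ⟨x, hx⟩ := hBne
    have hbB : BddBelow {t | t ∈ Set.Icc (tm n) T ∧ proj (ξ t) ∈ frontier D} :=
      ⟨tm n, fun y hy => hy.1.1⟩
    exact (hTmeq ▸ csInf_le hbB hx).trans hx.1.2
  have htT : t ≤ T := ht2.trans hTmnT
  have hsub2 : Set.Icc s t ⊆ Set.Icc (0:ℝ) T := fun u hu => ⟨h0s.trans hu.1, hu.2.trans htT⟩
  have hsIcc : s ∈ Set.Icc (0:ℝ) T := ⟨h0s, hst.trans htT⟩
  have htIcc : t ∈ Set.Icc (0:ℝ) T := ⟨h0s.trans hst, htT⟩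
  have h0Icc : (0:ℝ) ∈ Set.Icc (0:ℝ) T := ⟨le_rfl, hT.le⟩
  -- continuity and integrability
  have hcξ : ContinuousOn ξ (Set.Icc 0 T) := hξ.1
  have hgcont : ContinuousOn (fun u => gradient U (ξ u)) (Set.Icc 0 T) :=
    (gradient_continuous U hU.1).comp_continuousOn hcξ
  have hintg : ∀ x y : ℝ, x ∈ Set.Icc (0:ℝ) T → y ∈ Set.Icc (0:ℝ) T →
      IntervalIntegrable (fun u => gradient U (ξ u)) MeasureTheory.volume x y := by
    intro x y hx hy
    apply ContinuousOn.intervalIntegrable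
    apply hgcont.mono
    exact Set.uIcc_subset_Icc hx hy
  have hgn : ContinuousOn (fun u => ((m:ℝ)/2) * ‖gradient U (ξ u)‖) (Set.Icc 0 T) :=
    continuousOn_const.mul hgcont.norm
  have hintn : ∀ x y : ℝ, x ∈ Set.Icc (0:ℝ) T → y ∈ Set.Icc (0:ℝ) T →
      IntervalIntegrable (fun u => ((m:ℝ)/2) * ‖gradient U (ξ u)‖) MeasureTheory.volume x y := by
    intro x y hx hy
    apply ContinuousOn.intervalIntegrable
    apply hgn.mono
    exact Set.uIcc_subset_Icc hx hy
  -- φm in terms of ξ and w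
  have hφeq : ∀ u ∈ Set.Icc (0:ℝ) T, φm u = ξ u - x₀ - w u := by
    intro u hu
    rw [hφm u, hξ.2 u hu]
    abel
  have hφdiff : ∀ x y : ℝ, x ∈ Set.Icc (0:ℝ) T → y ∈ Set.Icc (0:ℝ) T →
      φm y - φm x = -(((m:ℝ)/2) • ∫ u in x..y, gradient U (ξ u)) := by
    intro x y hx hy
    rw [hφm x, hφm y]
    have hadj := intervalIntegral.integral_add_adjacent_intervals
      (hintg 0 x h0Icc hx) (hintg x y hx hy)
    have hsplitint : (∫ u in x..y, gradient U (ξ u))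
        = (∫ u in (0:ℝ)..y, gradient U (ξ u)) - ∫ u in (0:ℝ)..x, gradient U (ξ u) := by
      rw [← hadj]; abel
    rw [hsplitint, smul_sub]
    abel
  -- variation bounded by the integral of the norm
  set Ψ : ℝ → ℝ := fun v => ∫ u in s..v, ((m:ℝ)/2) * ‖gradient U (ξ u)‖ with hΨdef
  have hΨinc : ∀ x y : ℝ, x ∈ Set.Icc s t → y ∈ Set.Icc s t → x ≤ y →
      ‖φm y - φm x‖ ≤ Ψ y - Ψ x := by
    intro x y hx hy hxy
    have hx' := hsub2 hx
    have hy' := hsub2 hy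
    rw [hφdiff x y hx' hy', norm_neg, norm_smul, Real.norm_eq_abs,
      abs_of_nonneg (by positivity : (0:ℝ) ≤ (m:ℝ)/2)]
    have h1 : ‖∫ u in x..y, gradient U (ξ u)‖ ≤ ∫ u in x..y, ‖gradient U (ξ u)‖ :=
      intervalIntegral.norm_integral_le_integral_norm hxy
    have hΨxy : Ψ y - Ψ x = ∫ u in x..y, ((m:ℝ)/2) * ‖gradient U (ξ u)‖ := by
      have hadj := intervalIntegral.integral_add_adjacent_intervals
        (hintn s x hsIcc hx') (hintn x y hx' hy')
      rw [hΨdef]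
      simp only
      rw [← hadj]
      ring
    rw [hΨxy, intervalIntegral.integral_const_mul]
    have := mul_le_mul_of_nonneg_left h1 (by positivity : (0:ℝ) ≤ (m:ℝ)/2)
    linarith
  have hvar : variationOnFromTo φm (Set.Icc 0 T) s t ≤ Ψ t - Ψ s := by
    rw [variationOnFromTo.eq_of_le _ _ hst, Set.inter_eq_self_of_subset_right hsub2]
    have hle := eVariationOn_le_of_increments φm Ψ hst hΨinc
    have hnn : 0 ≤ Ψ t - Ψ s := by
      have := hΨinc s t ⟨le_rfl, hst⟩ ⟨hst, le_rfl⟩ hst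
      linarith [norm_nonneg (φm t - φm s)]
    exact ENNReal.toReal_le_of_le_ofReal hnn hle
  have hΨs : Ψ s = 0 := intervalIntegral.integral_same
  have hΨt : Ψ t = ((m:ℝ)/2) * ∫ u in s..t, ‖gradient U (ξ u)‖ :=
    intervalIntegral.integral_const_mul _ _
  -- the key geometric claim between stopping times
  have hC1 : ∀ u : ℝ, s < u → u < t → u ≠ tm n → gradient U (ξ u) ≠ 0 →
      0 < Metric.infDist (ξ u) (closure D) ∧ proj (ξ u) ∈ frontier D ∧
        ‖proj (ξ u) - proj (ξ (Tm (n-1)))‖ < δ / 2 := by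
    intro u hsu hut hune hgne
    have huIcc : u ∈ Set.Icc (0:ℝ) T := ⟨h0s.trans hsu.le, hut.le.trans htT⟩
    have hρu4 : Metric.infDist (ξ u) (closure D) ≤ r₀/4 := hdist u huIcc
    have hgeq : gradient U (ξ u) = (2:ℝ) • (ξ u - proj (ξ u)) :=
      gradient_eq_proj D hE hr₀ U hU proj hproj (ξ u) (by linarith)
    obtain ⟨hpE, hpd⟩ := hproj (ξ u) (by linarith)
    have hρupos : 0 < Metric.infDist (ξ u) (closure D) := by
      rcases lt_or_eq_of_le (Metric.infDist_nonneg
        (x := ξ u) (s := closure D)) with h | h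
      · exact h
      · exfalso
        apply hgne
        have hproj0 : proj (ξ u) = ξ u := by
          have h2 : dist (ξ u) (proj (ξ u)) = 0 := by rw [hpd, ← h]
          rw [dist_eq_zero] at h2
          exact h2.symm
        rw [hgeq, hproj0]
        simp
    have hpfront : proj (ξ u) ∈ frontier D := by
      rw [hDopen.frontier_eq]
      refine ⟨hpE, fun hpD => ?_⟩
      obtain ⟨ε, hεpos, hball⟩ := Metric.isOpen_iff.mp hDopen _ hpD
      set ρu := Metric.infDist (ξ u) (closure D) with hρudef
      set ν := ρu⁻¹ • (ξ u - proj (ξ u)) with hν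
      have hξp : ξ u - proj (ξ u) = ρu • ν := by
        rw [hν, smul_inv_smul₀ (ne_of_gt hρupos)]
      have hνn : ‖ν‖ = 1 := by
        rw [hν, norm_smul, Real.norm_eq_abs, abs_of_pos (inv_pos.mpr hρupos),
          ← dist_eq_norm, hpd]
        field_simp
      set ε' := min ε ρu with hε'
      have hε'pos : 0 < ε' := lt_min hεpos hρupos
      have hε'ε : ε' ≤ ε := min_le_left _ _
      have hε'ρ : ε' ≤ ρu := min_le_right _ _
      set qpt := proj (ξ u) + (ε'/2) • ν with hq
      have hqD : qpt ∈ D := by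
        apply hball
        rw [Metric.mem_ball, dist_eq_norm, hq]
        have : proj (ξ u) + (ε'/2) • ν - proj (ξ u) = (ε'/2) • ν := by abel
        rw [this, norm_smul, hνn, Real.norm_eq_abs, abs_of_pos (by positivity), mul_one]
        linarith
      have hdq : dist (ξ u) qpt = ρu - ε'/2 := by
        rw [dist_eq_norm, hq]
        have hrw : ξ u - (proj (ξ u) + (ε'/2) • ν) = (ρu - ε'/2) • ν := by
          calc ξ u - (proj (ξ u) + (ε'/2) • ν)
              = (ξ u - proj (ξ u)) - (ε'/2) • ν := by abel
            _ = ρu • ν - (ε'/2) • ν := by rw [hξp]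
            _ = (ρu - ε'/2) • ν := by rw [sub_smul]
        rw [hrw, norm_smul, hνn, Real.norm_eq_abs, abs_of_pos (by linarith), mul_one]
      have hcontra : ρu ≤ ρu - ε'/2 := by
        have h1 : Metric.infDist (ξ u) (closure D) ≤ dist (ξ u) qpt :=
          Metric.infDist_le_dist_of_mem (subset_closure hqD)
        rw [hdq] at h1
        exact h1
      linarith
    refine ⟨hρupos, hpfront, ?_⟩
    rcases lt_or_gt_of_ne hune with hlt' | hgt'
    · obtain ⟨hAne, htmeq⟩ := htm n hn le_rfl
      by_contra hge
      push_neg at hge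
      have huA : u ∈ {t | t ∈ Set.Ioc (Tm (n-1)) T ∧
          δ/2 ≤ ‖proj (ξ t) - proj (ξ (Tm (n-1)))‖} :=
        ⟨⟨lt_of_le_of_lt hs1 hsu, hut.le.trans htT⟩, hge⟩
      have hbdd : BddBelow {t | t ∈ Set.Ioc (Tm (n-1)) T ∧
          δ/2 ≤ ‖proj (ξ t) - proj (ξ (Tm (n-1)))‖} :=
        ⟨Tm (n-1), fun y hy => hy.1.1.le⟩
      have hle' := csInf_le hbdd huA
      rw [← htmeq] at hle'
      exact absurd hle' (not_le.mpr hlt')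
    · exfalso
      have huB : u ∈ {t | t ∈ Set.Icc (tm n) T ∧ proj (ξ t) ∈ frontier D} :=
        ⟨⟨hgt'.le, hut.le.trans htT⟩, hpfront⟩
      have hbdd : BddBelow {t | t ∈ Set.Icc (tm n) T ∧ proj (ξ t) ∈ frontier D} :=
        ⟨tm n, fun y hy => hy.1.1⟩
      have hle' := csInf_le hbdd huB
      rw [← hTmeq] at hle'
      have : u < Tm n := lt_of_lt_of_le hut ht2
      linarith
  -- choice of the direction l
  have hlex : ∃ l : Euc d, ‖l‖ = 1 ∧ ∀ u : ℝ, s < u → u < t → u ≠ tm n →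
      (inner ℝ l (gradient U (ξ u)) : ℝ) ≤ -(1/β) * ‖gradient U (ξ u)‖ := by
    by_cases hall : ∀ u : ℝ, s < u → u < t → u ≠ tm n → gradient U (ξ u) = 0
    · refine ⟨EuclideanSpace.single (⟨0, by omega⟩ : Fin d) (1:ℝ), ?_, ?_⟩
      · rw [EuclideanSpace.norm_single]
        norm_num
      · intro u h1 h2 h3
        rw [hall u h1 h2 h3]
        simp
    · push_neg at hall
      obtain ⟨u₀, hu₀1, hu₀2, hu₀3, hu₀g⟩ := hall
      obtain ⟨hρ₀, hfront₀, hdist₀⟩ := hC1 u₀ hu₀1 hu₀2 hu₀3 hu₀g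
      obtain ⟨l, hl1, hlprop⟩ := hB.2.2 (proj (ξ u₀)) hfront₀
      refine ⟨l, hl1, ?_⟩
      intro u h1 h2 h3
      by_cases hgz : gradient U (ξ u) = 0
      · rw [hgz]
        simp
      · obtain ⟨hρu, hfrontu, hdistu⟩ := hC1 u h1 h2 h3 hgz
        have huIcc : u ∈ Set.Icc (0:ℝ) T := ⟨h0s.trans h1.le, h2.le.trans htT⟩
        have hρu4 : Metric.infDist (ξ u) (closure D) ≤ r₀/4 := hdist u huIcc
        set ρu := Metric.infDist (ξ u) (closure D) with hρudef
        obtain ⟨hpE, hpd⟩ := hproj (ξ u) (by linarith)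
        set nu := ρu⁻¹ • (proj (ξ u) - ξ u) with hnu
        have hnun : ‖nu‖ = 1 := by
          rw [hnu, norm_smul, Real.norm_eq_abs, abs_of_pos (inv_pos.mpr hρu),
            norm_sub_rev, ← dist_eq_norm, hpd]
          field_simp
          exact hρudef.symm
        have hrnu : ρu • nu = proj (ξ u) - ξ u := by
          rw [hnu, smul_inv_smul₀ (ne_of_gt hρu)]
        have hmemn : nu ∈ nsetAll D (proj (ξ u)) := by
          have hmm : nu ∈ nset D (proj (ξ u)) ρu := by
            refine ⟨hnun, ?_⟩
            have hc : proj (ξ u) - ρu • nu = ξ u := by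
              rw [hrnu]
              abel
            rw [hc]
            apply Set.eq_empty_iff_forall_notMem.mpr
            rintro z ⟨hz1, hz2⟩
            have hzd : ρu ≤ dist (ξ u) z :=
              Metric.infDist_le_dist_of_mem (subset_closure hz2)
            rw [Metric.mem_ball, dist_comm] at hz1
            linarith
          exact Set.mem_biUnion (Set.mem_Ioi.mpr hρu) hmm
        have hball : proj (ξ u) ∈ Metric.ball (proj (ξ u₀)) δ := by
          rw [Metric.mem_ball, dist_eq_norm]
          have hsplit : proj (ξ u) - proj (ξ u₀)
              = (proj (ξ u) - proj (ξ (Tm (n-1)))) - (proj (ξ u₀) - proj (ξ (Tm (n-1)))) := by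
            abel
          rw [hsplit]
          calc ‖(proj (ξ u) - proj (ξ (Tm (n-1)))) - (proj (ξ u₀) - proj (ξ (Tm (n-1))))‖
              ≤ ‖proj (ξ u) - proj (ξ (Tm (n-1)))‖ + ‖proj (ξ u₀) - proj (ξ (Tm (n-1)))‖ :=
                norm_sub_le _ _
            _ < δ := by linarith
        have hkey := hlprop (proj (ξ u)) ⟨hball, hfrontu⟩ nu hmemn
        have hgeq : gradient U (ξ u) = (2:ℝ) • (ξ u - proj (ξ u)) :=
          gradient_eq_proj D hE hr₀ U hU proj hproj (ξ u) (by linarith)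
        have hgnu : gradient U (ξ u) = (-(2*ρu)) • nu := by
          have h4 : (-(2*ρu)) • nu = (-2 : ℝ) • (ρu • nu) := by module
          rw [hgeq, h4, hrnu]
          module
        have hgnorm : ‖gradient U (ξ u)‖ = 2*ρu := by
          rw [hgnu, norm_smul, hnun, Real.norm_eq_abs, abs_neg,
            abs_of_pos (by positivity), mul_one]
        have hinner : (inner ℝ l (gradient U (ξ u)) : ℝ) = -(2*ρu) * (inner ℝ l nu : ℝ) := by
          rw [hgnu, real_inner_smul_right]
        rw [hinner, hgnorm]
        have h5 : 1/β ≤ (inner ℝ l nu : ℝ) := hkey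
        have h6 : (2*ρu) * (1/β) ≤ (2*ρu) * (inner ℝ l nu : ℝ) :=
          mul_le_mul_of_nonneg_left h5 (by positivity)
        linarith
  obtain ⟨l, hl1, hlkey⟩ := hlex
  -- a.e. comparison of the integrands
  have hqcont : ContinuousOn (fun u => (inner ℝ l (gradient U (ξ u)) : ℝ)) (Set.Icc 0 T) :=
    continuousOn_const.inner hgcont
  have hintq : IntervalIntegrable (fun u => (inner ℝ l (gradient U (ξ u)) : ℝ))
      MeasureTheory.volume s t := by
    apply ContinuousOn.intervalIntegrable
    exact hqcont.mono (Set.uIcc_subset_Icc hsIcc htIcc)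
  have hintnb : IntervalIntegrable (fun u => -(1/β) * ‖gradient U (ξ u)‖)
      MeasureTheory.volume s t := by
    apply ContinuousOn.intervalIntegrable
    exact (continuousOn_const.mul hgcont.norm).mono (Set.uIcc_subset_Icc hsIcc htIcc)
  have hae : ∀ᵐ u ∂(MeasureTheory.volume.restrict (Set.Icc s t)),
      (inner ℝ l (gradient U (ξ u)) : ℝ) ≤ -(1/β) * ‖gradient U (ξ u)‖ := by
    rw [MeasureTheory.ae_restrict_iff' measurableSet_Icc]
    have hcnt : ({s, t, tm n} : Set ℝ).Countable := by
      apply Set.Countable.insert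
      apply Set.Countable.insert
      exact Set.countable_singleton _
    have hz : MeasureTheory.volume ({s, t, tm n} : Set ℝ) = 0 :=
      hcnt.measure_zero _
    have hae0 : ∀ᵐ u : ℝ ∂MeasureTheory.volume, u ∉ ({s, t, tm n} : Set ℝ) :=
      MeasureTheory.measure_eq_zero_iff_ae_notMem.mp hz
    filter_upwards [hae0] with u hu huIcc
    have hus : u ≠ s := fun h => hu (by rw [h]; simp)
    have hut : u ≠ t := fun h => hu (by rw [h]; simp)
    have hutm : u ≠ tm n := fun h => hu (by rw [h]; simp)
    exact hlkey u (lt_of_le_of_ne huIcc.1 (Ne.symm hus)) (lt_of_le_of_ne huIcc.2 hut) hutm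
  have hmono := intervalIntegral.integral_mono_ae_restrict hst hintq hintnb hae
  -- exchanging inner product and integral
  have hswap : (∫ u in s..t, (inner ℝ l (gradient U (ξ u)) : ℝ))
      = (inner ℝ l (∫ u in s..t, gradient U (ξ u)) : ℝ) := by
    have := ContinuousLinearMap.intervalIntegral_comp_comm
      (innerSL ℝ l) (hintg s t hsIcc htIcc) (a := s) (b := t)
    simpa using this
  set Jn := ∫ u in s..t, ‖gradient U (ξ u)‖ with hJndef
  have hJnn : 0 ≤ Jn := by
    apply intervalIntegral.integral_nonneg hst
    intro u _
    exact norm_nonneg _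
  have hrhs : (∫ u in s..t, -(1/β) * ‖gradient U (ξ u)‖) = -(1/β) * Jn :=
    intervalIntegral.integral_const_mul _ _
  have hq' : (inner ℝ l (∫ u in s..t, gradient U (ξ u)) : ℝ) ≤ -(1/β) * Jn := by
    rw [← hswap, ← hrhs]
    exact hmono
  have hφst : φm t - φm s = -(((m:ℝ)/2) • ∫ u in s..t, gradient U (ξ u)) :=
    hφdiff s t hsIcc htIcc
  have hip : (inner ℝ l (φm t - φm s) : ℝ)
      = -((m:ℝ)/2) * (inner ℝ l (∫ u in s..t, gradient U (ξ u)) : ℝ) := by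
    rw [hφst, inner_neg_right, real_inner_smul_right]
    ring
  have hlow : ((m:ℝ)/2) * ((1/β) * Jn) ≤ (inner ℝ l (φm t - φm s) : ℝ) := by
    rw [hip]
    have h7 : ((m:ℝ)/2) * (inner ℝ l (∫ u in s..t, gradient U (ξ u)) : ℝ)
        ≤ ((m:ℝ)/2) * (-(1/β) * Jn) :=
      mul_le_mul_of_nonneg_left hq' (by positivity)
    linarith
  have hVfin : variationOnFromTo φm (Set.Icc 0 T) s t ≤ β * (inner ℝ l (φm t - φm s) : ℝ) := by
    have h1 : variationOnFromTo φm (Set.Icc 0 T) s t ≤ ((m:ℝ)/2) * Jn := by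
      rw [hΨt, hΨs] at hvar
      rw [hJndef]
      linarith
    have h2 : ((m:ℝ)/2) * Jn = β * (((m:ℝ)/2) * ((1/β) * Jn)) := by
      field_simp
    have h3 : β * (((m:ℝ)/2) * ((1/β) * Jn)) ≤ β * (inner ℝ l (φm t - φm s) : ℝ) :=
      mul_le_mul_of_nonneg_left hlow hβ0.le
    linarith
  -- bounding the inner product by the oscillations
  have hφval : φm t - φm s = (ξ t - ξ s) - (w t - w s) := by
    rw [hφeq t htIcc, hφeq s hsIcc]
    abel
  have hiosc : (inner ℝ l (φm t - φm s) : ℝ) ≤ osc ξ s t + osc w s t := by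
    rw [hφval]
    have h1 : (inner ℝ l ((ξ t - ξ s) - (w t - w s)) : ℝ)
        = (inner ℝ l (ξ t - ξ s) : ℝ) - (inner ℝ l (w t - w s) : ℝ) :=
      inner_sub_right _ _ _
    have h2 : (inner ℝ l (ξ t - ξ s) : ℝ) ≤ ‖ξ t - ξ s‖ := by
      have := real_inner_le_norm l (ξ t - ξ s)
      rw [hl1, one_mul] at this
      exact this
    have h3 : -(inner ℝ l (w t - w s) : ℝ) ≤ ‖w t - w s‖ := by
      have habs := abs_real_inner_le_norm l (w t - w s)
      rw [hl1, one_mul] at habs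
      linarith [neg_abs_le ((inner ℝ l (w t - w s)) : ℝ)]
    obtain ⟨M, hM⟩ := isCompact_Icc.exists_bound_of_continuousOn hcξ
    have hosc1 : ‖ξ t - ξ s‖ ≤ osc ξ s t := by
      apply le_csSup
      · refine ⟨2*M, ?_⟩
        rintro c ⟨u', v', hu', hv', hvt', rfl⟩
        have hb1 := hM u' (hsub2 ⟨hu', le_trans hv'.le hvt'⟩)
        have hb2 := hM v' (hsub2 ⟨le_trans hu' hv'.le, hvt'⟩)
        calc ‖ξ v' - ξ u'‖ ≤ ‖ξ v'‖ + ‖ξ u'‖ := norm_sub_le _ _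
          _ ≤ 2*M := by linarith
      · exact ⟨s, t, le_rfl, hlt, le_rfl, rfl⟩
    have hosc2 : ‖w t - w s‖ ≤ osc w s t := by
      apply le_csSup
      · refine ⟨K * T ^ α, ?_⟩
        rintro c ⟨u', v', hu', hv', hvt', rfl⟩
        have h0u : 0 ≤ u' := h0s.trans hu'
        have hb1 := hHolK u' v' h0u hv'.le (hvt'.trans htT)
        have hb2 : (v' - u') ^ α ≤ T ^ α :=
          Real.rpow_le_rpow (by linarith) (by linarith [hvt'.trans htT]) hα.le
        calc ‖w v' - w u'‖ ≤ K * (v'-u')^α := hb1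
          _ ≤ K * T^α := mul_le_mul_of_nonneg_left hb2 hK.le
      · exact ⟨s, t, le_rfl, hlt, le_rfl, rfl⟩
    linarith
  calc variationOnFromTo φm (Set.Icc 0 T) s t
      ≤ β * (inner ℝ l (φm t - φm s) : ℝ) := hVfin
    _ ≤ β * (osc ξ s t + osc w s t) := mul_le_mul_of_nonneg_left hiosc hβ0.le

end
end

section
/- Suppose D ⊂ ℝ^d is a nonempty open set satisfying Condition (A) and U is a penalty function for D with constant L. Let x ∈ ℝ^d satisfy 0 < dist(x, D̄) ≤ r₀/2, let x̄ be the unique nearest point to x in D̄, and let u ∈ ℝ. Define η_t := x̄ − (x̄ − x)·exp(−(t − u)) for t ≥ u. Then for every t ≥ u: (i) x̄ is the unique nearest point to η_t in D̄ and dist(η_t, D̄) = |η_t − x̄| = dist(x, D̄)·exp(−(t − u)); and (ii) η_t = x − (1/2)∫_u^t ∇U(η_s) ds. -/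
open Set Metric MeasureTheory Filter

noncomputable section

/-! ### Auxiliary lemmas -/

lemma hasGradientAt_norm_sq {d : ℕ} (p z : Euc d) :
    HasGradientAt (fun y => ‖y - p‖ ^ 2) ((2:ℝ) • (z - p)) z := by
  rw [hasGradientAt_iff_hasFDerivAt]
  have h1 : HasFDerivAt (fun y : Euc d => y - p) (ContinuousLinearMap.id ℝ (Euc d)) z :=
    (hasFDerivAt_id z).sub_const p
  have h2 := HasFDerivAt.inner ℝ h1 h1
  have heq : (fun y : Euc d => ‖y - p‖ ^ 2)
      = fun y : Euc d => (inner ℝ (y - p) (y - p) : ℝ) := by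
    funext y; rw [real_inner_self_eq_norm_sq]
  rw [heq]
  convert h2 using 1
  · rfl
  ext t
  simp only [ContinuousLinearMap.coe_comp', Function.comp_apply,
    ContinuousLinearMap.prod_apply, ContinuousLinearMap.coe_id', id_eq,
    fderivInnerCLM_apply, InnerProductSpace.toDual_apply_apply, real_inner_smul_left]
  rw [real_inner_comm t (z - p)]
  ring

lemma gradient_eq_of_touch {d : ℕ} {U : Euc d → ℝ} (hU : ContDiff ℝ 1 U) (p z : Euc d)
    (heq : U z = ‖z - p‖ ^ 2) (hle : ∀ᶠ y in nhds z, U y ≤ ‖y - p‖ ^ 2) :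
    gradient U z = (2:ℝ) • (z - p) := by
  have hdU : HasFDerivAt U (fderiv ℝ U z) z := (hU.differentiable one_ne_zero z).hasFDerivAt
  have hgf := hasGradientAt_iff_hasFDerivAt.mp (hasGradientAt_norm_sq p z)
  have hmin : IsLocalMin (fun y => ‖y - p‖ ^ 2 - U y) z := by
    refine Filter.Eventually.mono hle fun y hy => ?_
    simp only [heq]
    linarith
  have h0 := hmin.hasFDerivAt_eq_zero (hgf.sub hdU)
  have hfd : fderiv ℝ U z = (InnerProductSpace.toDual ℝ (Euc d)) ((2:ℝ) • (z - p)) :=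
    (sub_eq_zero.mp h0).symm
  have : HasGradientAt U ((2:ℝ) • (z - p)) z := by
    rw [hasGradientAt_iff_hasFDerivAt, ← hfd]; exact hdU
  exact this.gradient

lemma key_geom {d : ℕ} (S : Set (Euc d)) (hS : S.Nonempty) (p : Euc d) (hp : p ∈ S)
    (v c : Euc d) (r r₀ s : ℝ) (hr : 0 < r) (hr0 : r ≤ r₀ / 2) (hvn : ‖v‖ = r)
    (hc : c = p + (r₀ / r) • v)
    (hball : ∀ w ∈ S, r₀ ≤ dist w c)
    (hs0 : 0 < s) (hs1 : s ≤ 1) (z : Euc d) (hz : z = p + s • v) :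
    infDist z S = s * r ∧ dist z p = s * r ∧
      ∀ y ∈ S, dist z y = s * r → y = p := by
  have hsr_pos : 0 < s * r := mul_pos hs0 hr
  have hsr_le : s * r ≤ r := by nlinarith
  have hsr_lt : s * r < r₀ := by nlinarith
  have hzp : z - p = s • v := by rw [hz]; abel
  have hdzp : dist z p = s * r := by
    rw [dist_eq_norm, hzp, norm_smul, hvn, Real.norm_eq_abs, abs_of_pos hs0]
  have hzc : z - c = ((s * r - r₀) / r) • v := by
    rw [hz, hc]
    have : (s : ℝ) - r₀ / r = (s * r - r₀) / r := by field_simp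
    rw [← this, sub_smul]
    abel
  have hdzc : ‖z - c‖ = r₀ - s * r := by
    have h1 : (s * r - r₀) / r ≤ 0 := by
      apply div_nonpos_of_nonpos_of_nonneg <;> linarith
    rw [hzc, norm_smul, hvn, Real.norm_eq_abs, abs_of_nonpos h1]
    field_simp; ring
  have hlow : ∀ w ∈ S, s * r ≤ dist z w := by
    intro w hw
    have h1 := hball w hw
    have h2 : dist w c ≤ dist w z + dist z c := dist_triangle w z c
    have h3 : dist z c = r₀ - s * r := by rw [dist_eq_norm]; exact hdzc
    rw [dist_comm z w]
    linarith
  have hinf : infDist z S = s * r := by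
    refine le_antisymm (le_trans (infDist_le_dist_of_mem hp) hdzp.le) ?_
    by_contra hlt
    push_neg at hlt
    obtain ⟨y, hy, hdy⟩ := (infDist_lt_iff hS).mp hlt
    exact absurd hdy (not_lt.mpr (hlow y hy))
  refine ⟨hinf, hdzp, fun y hy hdy => ?_⟩
  -- uniqueness
  have ha : ‖y - z‖ = s * r := by rw [norm_sub_rev, ← dist_eq_norm]; exact hdy
  have hb : ‖z - c‖ = r₀ - s * r := hdzc
  have hab : ‖(y - z) + (z - c)‖ = ‖y - z‖ + ‖z - c‖ := by
    have h1 : (y - z) + (z - c) = y - c := by abel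
    have h2 : r₀ ≤ ‖y - c‖ := by rw [← dist_eq_norm]; exact hball y hy
    have h3 : ‖(y - z) + (z - c)‖ ≤ ‖y - z‖ + ‖z - c‖ := norm_add_le _ _
    rw [h1] at h3 ⊢
    rw [ha, hb] at h3 ⊢
    linarith
  have hray : SameRay ℝ (y - z) (z - c) := sameRay_iff_norm_add.mpr hab
  have ha0 : y - z ≠ 0 := by
    intro h; rw [h, norm_zero] at ha; linarith
  obtain ⟨t, ht0, hta⟩ := hray.exists_nonneg_left ha0
  have htnorm : t * (s * r) = r₀ - s * r := by
    have := congrArg norm hta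
    rwa [norm_smul, Real.norm_eq_abs, abs_of_nonneg ht0, ha, hb] at this
  have htpos : 0 < t := by nlinarith
  have hcancel : t • (y - z) = t • ((-s) • v) := by
    rw [hta, hzc, smul_smul]
    congr 1
    have hr0sr : r₀ - s * r ≠ 0 := by nlinarith
    have : t = (r₀ - s * r) / (s * r) := by field_simp; linarith
    rw [this]
    field_simp
    ring
  have hyz : y - z = (-s) • v := smul_right_injective _ (ne_of_gt htpos) hcancel
  have : y = z + (-s) • v := by rw [← hyz]; abel
  rw [this, hz, neg_smul]
  abel

set_option maxHeartbeats 1000000 in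
/-- the explicit exponential curve `η_t = x̄ − (x̄ − x)e^{−(t−u)}`
solves the autonomous penalized equation `η_t = x − (1/2)∫_u^t ∇U(η_s) ds`, its
nearest point in `D̄` is always `x̄`, and its distance to `D̄` decays exponentially. -/
theorem exponential_curve_solves_penalized_ode
    (d : ℕ) (hd : 1 ≤ d) (D : Set (Euc d)) (hDne : D.Nonempty) (hDopen : IsOpen D)
    (r₀ L : ℝ) (hA : CondA D r₀) (hL : 0 < L)
    (U : Euc d → ℝ) (hU : IsPenalty D r₀ L U)
    (x : Euc d) (hx1 : 0 < Metric.infDist x (closure D))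
    (hx2 : Metric.infDist x (closure D) ≤ r₀ / 2)
    (xb : Euc d) (hxb : xb ∈ closure D ∧ dist x xb = Metric.infDist x (closure D))
    (u : ℝ) (η : ℝ → Euc d)
    (hη : ∀ t : ℝ, η t = xb - Real.exp (-(t - u)) • (xb - x)) :
    ∀ t : ℝ, u ≤ t →
      (xb ∈ closure D ∧ dist (η t) xb = Metric.infDist (η t) (closure D) ∧
        (∀ y : Euc d, y ∈ closure D ∧
            dist (η t) y = Metric.infDist (η t) (closure D) → y = xb) ∧
        Metric.infDist (η t) (closure D)
          = Metric.infDist x (closure D) * Real.exp (-(t - u))) ∧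
      η t = x - (1 / 2 : ℝ) • ∫ s in u..t, gradient U (η s) := by
  obtain ⟨hxbS, hxbd⟩ := hxb
  set S := closure D with hSdef
  set r := Metric.infDist x S with hrdef
  have hSne : S.Nonempty := hDne.closure
  have hr₀pos : 0 < r₀ := hA.1
  have hrpos : 0 < r := hx1
  have hrle : r ≤ r₀ / 2 := hx2
  set v : Euc d := x - xb with hv
  have hvn : ‖v‖ = r := by rw [hv, ← dist_eq_norm]; exact hxbd
  -- `xb` lies on the frontier of `D`
  have hxbf : xb ∈ frontier D := by
    rw [frontier, Set.mem_diff]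
    refine ⟨hxbS, fun hint => ?_⟩
    obtain ⟨ε, hε, hballε⟩ := Metric.isOpen_iff.mp isOpen_interior xb hint
    set δ : ℝ := min (ε / (2 * r)) 1 with hδ
    have hδ0 : 0 < δ := lt_min (by positivity) one_pos
    have hδ1 : δ ≤ 1 := min_le_right _ _
    set q : Euc d := xb + δ • v with hq
    have hqball : q ∈ Metric.ball xb ε := by
      rw [Metric.mem_ball, dist_eq_norm]
      have : q - xb = δ • v := by rw [hq]; abel
      rw [this, norm_smul, hvn, Real.norm_eq_abs, abs_of_pos hδ0]
      have h1 : δ ≤ ε / (2 * r) := min_le_left _ _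
      have h2 : δ * r ≤ ε / (2 * r) * r := by nlinarith
      have h3 : ε / (2 * r) * r = ε / 2 := by field_simp
      linarith
    have hqS : q ∈ S := subset_closure (interior_subset (hballε hqball))
    have hxq : dist x q = (1 - δ) * r := by
      have : x - q = (1 - δ) • v := by rw [hq, hv, sub_smul, one_smul]; abel
      rw [dist_eq_norm, this, norm_smul, hvn, Real.norm_eq_abs,
        abs_of_nonneg (by linarith)]
    have := Metric.infDist_le_dist_of_mem hqS (x := x)
    rw [hxq, ← hrdef] at this
    nlinarith
  -- the exterior sphere at `xb` from Condition (A)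
  obtain ⟨hNA, -⟩ := hA.2 xb hxbf
  have hrne : r ≠ 0 := ne_of_gt hrpos
  have hnmem : (r⁻¹ • (xb - x)) ∈ nset D xb r := by
    constructor
    · rw [norm_smul, Real.norm_eq_abs, abs_of_pos (inv_pos.mpr hrpos)]
      have : ‖xb - x‖ = r := by rw [norm_sub_rev, ← hv, hvn]
      rw [this]; field_simp
    · have hcen : xb - r • (r⁻¹ • (xb - x)) = x := by
        rw [smul_smul, mul_inv_cancel₀ hrne, one_smul]; abel
      rw [hcen, Set.eq_empty_iff_forall_notMem]
      rintro w ⟨hw1, hw2⟩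
      have h1 : r ≤ dist x w := Metric.infDist_le_dist_of_mem (subset_closure hw2)
      rw [Metric.mem_ball, dist_comm] at hw1
      linarith
  have hnAll : (r⁻¹ • (xb - x)) ∈ nsetAll D xb := by
    rw [nsetAll, Set.mem_iUnion₂]
    exact ⟨r, hrpos, hnmem⟩
  rw [hNA] at hnAll
  obtain ⟨-, hball0⟩ := hnAll
  set c : Euc d := xb + (r₀ / r) • v with hcdef
  have hc' : xb - r₀ • (r⁻¹ • (xb - x)) = c := by
    rw [hcdef, hv, smul_smul, ← div_eq_mul_inv]
    have : (r₀ / r) • (xb - x) = -((r₀ / r) • (x - xb)) := by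
      rw [← smul_neg]; congr 1; abel
    rw [this]; abel
  rw [hc'] at hball0
  have hSball : ∀ w ∈ S, r₀ ≤ dist w c := by
    intro w hw
    by_contra hlt
    push_neg at hlt
    have hsub : D ⊆ (Metric.ball c r₀)ᶜ := by
      intro y hy hyb
      exact Set.eq_empty_iff_forall_notMem.mp hball0 y ⟨hyb, hy⟩
    have hclosed : IsClosed ((Metric.ball c r₀)ᶜ) := isClosed_compl_iff.mpr Metric.isOpen_ball
    have hwS : w ∈ (Metric.ball c r₀)ᶜ := closure_minimal hsub hclosed hw
    exact hwS (Metric.mem_ball.mpr hlt)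
  -- geometry along the curve
  have hgeom : ∀ σ : ℝ, u ≤ σ →
      Metric.infDist (η σ) S = Real.exp (-(σ - u)) * r ∧
      dist (η σ) xb = Real.exp (-(σ - u)) * r ∧
      ∀ y ∈ S, dist (η σ) y = Real.exp (-(σ - u)) * r → y = xb := by
    intro σ hσ
    have hs0 : 0 < Real.exp (-(σ - u)) := Real.exp_pos _
    have hs1 : Real.exp (-(σ - u)) ≤ 1 := Real.exp_le_one_iff.mpr (by linarith)
    have hzeq : η σ = xb + Real.exp (-(σ - u)) • v := by
      rw [hη σ, hv]
      have : Real.exp (-(σ - u)) • (xb - x) = -(Real.exp (-(σ - u)) • (x - xb)) := by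
        rw [← smul_neg]; congr 1; abel
      rw [this]; abel
    exact key_geom S hSne xb hxbS v c r r₀ _ hrpos hrle hvn hcdef hSball hs0 hs1 _ hzeq
  intro t ht
  obtain ⟨hinf_t, hdist_t, huniq_t⟩ := hgeom t ht
  refine ⟨⟨hxbS, by rw [hdist_t, hinf_t], ?_, by rw [hinf_t]; ring⟩, ?_⟩
  · intro y ⟨hyS, hyd⟩
    exact huniq_t y hyS (by rw [← hinf_t]; exact hyd)
  -- the ODE part
  obtain ⟨hU1, hU2, hU3, hU4, hU5⟩ := hU
  have hgrad : ∀ σ ∈ Set.Ioc u t,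
      gradient U (η σ) = (2 * Real.exp (-(σ - u))) • v := by
    intro σ hσ
    obtain ⟨hinf, hdist, -⟩ := hgeom σ hσ.1.le
    set s : ℝ := Real.exp (-(σ - u)) with hsdef
    have hslt : s < 1 := Real.exp_lt_one_iff.mpr (by linarith [hσ.1])
    have hsr_lt : s * r < r₀ / 2 := by nlinarith [Real.exp_pos (-(σ - u))]
    have hUz : U (η σ) = ‖η σ - xb‖ ^ 2 := by
      rw [hU3 (η σ) (by rw [← hSdef, hinf]; linarith), ← hSdef, hinf, ← dist_eq_norm, hdist]
    have hle : ∀ᶠ y in nhds (η σ), U y ≤ ‖y - xb‖ ^ 2 := by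
      have hεpos : 0 < r₀ / 2 - s * r := by linarith
      filter_upwards [Metric.ball_mem_nhds (η σ) hεpos] with y hy
      rw [Metric.mem_ball] at hy
      have h1 : Metric.infDist y S ≤ Metric.infDist (η σ) S + dist y (η σ) :=
        Metric.infDist_le_infDist_add_dist
      rw [hinf] at h1
      have h2 : Metric.infDist y S ≤ r₀ / 2 := by linarith
      rw [hU3 y (by rw [← hSdef]; exact h2)]
      have h3 : Metric.infDist y S ≤ ‖y - xb‖ := by
        rw [← dist_eq_norm]; exact Metric.infDist_le_dist_of_mem hxbS
      have h4 : (0:ℝ) ≤ Metric.infDist y S := Metric.infDist_nonneg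
      rw [← hSdef]
      nlinarith
    have := gradient_eq_of_touch hU1 xb (η σ) hUz hle
    rw [this]
    have hzb : η σ - xb = s • v := by
      rw [hη σ, hv, hsdef]
      have : Real.exp (-(σ - u)) • (xb - x) = -(Real.exp (-(σ - u)) • (x - xb)) := by
        rw [← smul_neg]; congr 1; abel
      rw [this]; abel
    rw [hzb, smul_smul]
  have hInt : (∫ σ in u..t, gradient U (η σ))
      = (2 * (1 - Real.exp (-(t - u)))) • v := by
    rw [intervalIntegral.integral_of_le ht,
      MeasureTheory.setIntegral_congr_fun measurableSet_Ioc hgrad,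
      ← intervalIntegral.integral_of_le ht,
      intervalIntegral.integral_smul_const]
    congr 1
    have hderiv : ∀ σ ∈ Set.uIcc u t,
        HasDerivAt (fun τ => -2 * Real.exp (-(τ - u))) (2 * Real.exp (-(σ - u))) σ := by
      intro σ _
      have h1 : HasDerivAt (fun τ : ℝ => -(τ - u)) (-1) σ := by
        exact ((hasDerivAt_id σ).sub_const u).neg
      have h2 := (h1.exp).const_mul (-2 : ℝ)
      rw [show 2 * Real.exp (-(σ - u)) = -2 * (Real.exp (-(σ - u)) * -1) by ring]
      exact h2
    have hcont : IntervalIntegrable (fun σ => 2 * Real.exp (-(σ - u)))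
        MeasureTheory.volume u t := (Continuous.intervalIntegrable (by fun_prop) u t)
    rw [intervalIntegral.integral_eq_sub_of_hasDerivAt hderiv hcont]
    simp
    ring
  rw [hInt, hη t, hv, smul_smul]
  have hco : (1 / 2 : ℝ) * (2 * (1 - Real.exp (-(t - u)))) = 1 - Real.exp (-(t - u)) := by ring
  rw [hco, sub_smul, one_smul]
  have : Real.exp (-(t - u)) • (xb - x) = -(Real.exp (-(t - u)) • (x - xb)) := by
    rw [← smul_neg]; congr 1; abel
  rw [this]
  abel


end
end
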